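/- arXiv:2306.09240 — 3 statements merged into one kernel-verified Lean document; each statement's English description precedes it below -/
import Mathlib

section
/- Fix k ≥ 1 and ℓ ≥ 2, and let P = (X,≺) be the poset with X = {x₁,…,x_{k−1}} ⊔ {y₁,…,y_{ℓ−2}} ⊔ {z₁,z₂,z₃} ⊔ {u,v,w}, with chain z₁ ≺ x₁ ≺ ⋯ ≺ x_{k−1} ≺ z₂ ≺ y₁ ≺ ⋯ ≺ y_{ℓ−2} ≺ z₃, and additional relations x_{k−1} ≺ u ≺ y₁, z₂ ≺ v, z₂ ≺ w. Then F(k,ℓ+2) = (ℓ+1)ℓ, F(k+1,ℓ) = 2(ℓ−1), F(k,ℓ+1) = 2ℓ, F(k+1,ℓ+1) = ℓ(ℓ−1), and consequently F(k,ℓ+1)·F(k+1,ℓ+1) < F(k,ℓ+2)·F(k+1,ℓ), i.e. the inequality (CPC2) F(k,ℓ+2)·F(k+1,ℓ) ≤ F(k,ℓ+1)·F(k+1,ℓ+1) fails. -/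
/-- The number of linear extensions `L` of a finite poset `X`
(order-preserving bijections `X ≃ Fin (card X)`) such that
`L z₂ − L z₁ = k` and `L z₃ − L z₂ = l`. -/
noncomputable def F (X : Type) [PartialOrder X] [Fintype X] (z₁ z₂ z₃ : X) (k l : ℕ) : ℕ :=
  Nat.card {L : X ≃ Fin (Fintype.card X) // (∀ a b : X, a < b → L a < L b) ∧
    (L z₂ : ℕ) = (L z₁ : ℕ) + k ∧ (L z₃ : ℕ) = (L z₂ : ℕ) + l}

namespace CPCaux
set_option linter.unusedSectionVars false
set_option maxHeartbeats 1000000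

structure Ctx (k l : ℕ) (X : Type) [PartialOrder X] : Type where
  z₁ : X
  z₂ : X
  z₃ : X
  u : X
  v : X
  w : X
  c : ℕ → X
  hk : 1 ≤ k
  hl : 2 ≤ l
  hc0 : c 0 = z₁
  hck : c k = z₂
  hctop : c (k + l - 1) = z₃
  hchain_inj : ∀ i j : ℕ, i ≤ k + l - 1 → j ≤ k + l - 1 → c i = c j → i = j
  hdisj : ∀ i : ℕ, i ≤ k + l - 1 → c i ≠ u ∧ c i ≠ v ∧ c i ≠ w
  huv : u ≠ v
  huw : u ≠ w
  hvw : v ≠ w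
  hsurj : ∀ a : X, a = u ∨ a = v ∨ a = w ∨ ∃ i : ℕ, i ≤ k + l - 1 ∧ a = c i
  horder : ∀ a b : X, a < b ↔
      (∃ i j : ℕ, i < j ∧ j ≤ k + l - 1 ∧ a = c i ∧ b = c j) ∨
      (∃ i : ℕ, i ≤ k - 1 ∧ a = c i ∧ b = u) ∨
      (∃ j : ℕ, k + 1 ≤ j ∧ j ≤ k + l - 1 ∧ a = u ∧ b = c j) ∨
      (∃ i : ℕ, i ≤ k ∧ a = c i ∧ (b = v ∨ b = w))

variable {k l : ℕ} {X : Type} [PartialOrder X] [Fintype X]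

lemma chain_lt (C : Ctx k l X) {i j : ℕ} (hij : i < j) (hj : j ≤ k + l - 1) :
    C.c i < C.c j :=
  (C.horder _ _).2 (Or.inl ⟨i, j, hij, hj, rfl, rfl⟩)

lemma card_filter_triple {α} [DecidableEq α] (a b d : α) (hab : a ≠ b) (had : a ≠ d)
    (hbd : b ≠ d) (P : α → Prop) [DecidablePred P] :
    (({a, b, d} : Finset α).filter P).card =
      (if P a then 1 else 0) + (if P b then 1 else 0) + (if P d then 1 else 0) := by
  rw [show ({a, b, d} : Finset α) = insert a (insert b {d}) from rfl,
    Finset.filter_insert, Finset.filter_insert, Finset.filter_singleton]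
  split_ifs <;>
    simp_all [Finset.card_insert_of_notMem, Finset.mem_insert, Finset.mem_singleton]

lemma cardIio (C : Ctx k l X) (L : X ≃ Fin (Fintype.card X))
    (hm : ∀ a b : X, a < b → L a < L b) (t : Fin (Fintype.card X)) :
    (t : ℕ) = ((Finset.range (k + l)).filter (fun j => (L (C.c j) : ℕ) < t)).card
      + ((if (L C.u : ℕ) < t then 1 else 0) + (if (L C.v : ℕ) < t then 1 else 0)
      + (if (L C.w : ℕ) < t then 1 else 0)) := by
  classical
  have huv : L C.u ≠ L C.v := fun h => C.huv (L.injective h)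
  have huw : L C.u ≠ L C.w := fun h => C.huw (L.injective h)
  have hvw : L C.v ≠ L C.w := fun h => C.hvw (L.injective h)
  set A : Finset (Fin (Fintype.card X)) :=
    ((Finset.range (k + l)).filter (fun j => (L (C.c j) : ℕ) < t)).image (fun j => L (C.c j))
    with hA
  set B : Finset (Fin (Fintype.card X)) :=
    ({L C.u, L C.v, L C.w} : Finset _).filter (fun x => (x : ℕ) < t) with hB
  have hkl : 1 ≤ k + l := by have := C.hk; omega
  have hIio : Finset.Iio t = A ∪ B := by
    ext x
    simp only [Finset.mem_Iio, Finset.mem_union, hA, hB, Finset.mem_image,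
      Finset.mem_filter, Finset.mem_range, Finset.mem_insert, Finset.mem_singleton]
    constructor
    · intro hx
      rcases C.hsurj (L.symm x) with h | h | h | ⟨i, hi, h⟩
      · exact Or.inr ⟨Or.inl (by rw [← h, L.apply_symm_apply]), hx⟩
      · exact Or.inr ⟨Or.inr (Or.inl (by rw [← h, L.apply_symm_apply])), hx⟩
      · exact Or.inr ⟨Or.inr (Or.inr (by rw [← h, L.apply_symm_apply])), hx⟩
      · have hx' : L (C.c i) = x := by rw [← h, L.apply_symm_apply]
        exact Or.inl ⟨i, ⟨by omega, by rw [hx']; exact hx⟩, hx'⟩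
    · rintro (⟨j, ⟨hj, hjt⟩, rfl⟩ | ⟨_, hxt⟩)
      · exact hjt
      · exact hxt
  have hcard := Fin.card_Iio t
  rw [hIio] at hcard
  have hdisjAB : Disjoint A B := by
    rw [Finset.disjoint_left]
    rintro x hxA hxB
    simp only [hA, Finset.mem_image, Finset.mem_filter, Finset.mem_range] at hxA
    simp only [hB, Finset.mem_filter, Finset.mem_insert, Finset.mem_singleton] at hxB
    obtain ⟨j, ⟨hj, _⟩, rfl⟩ := hxA
    rcases hxB.1 with h | h | h
    · exact (C.hdisj j (by omega)).1 (L.injective h)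
    · exact (C.hdisj j (by omega)).2.1 (L.injective h)
    · exact (C.hdisj j (by omega)).2.2 (L.injective h)
  rw [Finset.card_union_of_disjoint hdisjAB] at hcard
  have hAcard : A.card = ((Finset.range (k + l)).filter (fun j => (L (C.c j) : ℕ) < t)).card := by
    apply Finset.card_image_of_injOn
    intro i hi j hj hij
    simp only [Finset.coe_filter, Finset.mem_range, Set.mem_setOf_eq, Finset.mem_coe, Finset.mem_filter] at hi hj
    exact C.hchain_inj i j (by omega) (by omega) (L.injective hij)
  have hBcard : B.card = (if (L C.u : ℕ) < t then 1 else 0) + (if (L C.v : ℕ) < t then 1 else 0)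
      + (if (L C.w : ℕ) < t then 1 else 0) :=
    card_filter_triple _ _ _ huv huw hvw _
  omega


lemma s_unique {a b d p q i : ℕ} (hab : a ≠ b) (had : a ≠ d) (hbd : b ≠ d) (hpa : p ≠ a)
    (hpb : p ≠ b) (hpd : p ≠ d) (hqa : q ≠ a) (hqb : q ≠ b) (hqd : q ≠ d)
    (hp : p = i + ((if a < p then 1 else 0) + (if b < p then 1 else 0) + (if d < p then 1 else 0)))
    (hq : q = i + ((if a < q then 1 else 0) + (if b < q then 1 else 0) + (if d < q then 1 else 0))) :
    p = q := by
  split_ifs at hp hq <;> omega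

lemma lci (C : Ctx k l X) (L : X ≃ Fin (Fintype.card X))
    (hm : ∀ a b : X, a < b → L a < L b) {i : ℕ} (hi : i ≤ k + l - 1) :
    (L (C.c i) : ℕ) = i + ((if (L C.u : ℕ) < (L (C.c i) : ℕ) then 1 else 0)
      + (if (L C.v : ℕ) < (L (C.c i) : ℕ) then 1 else 0)
      + (if (L C.w : ℕ) < (L (C.c i) : ℕ) then 1 else 0)) := by
  have hkl : 1 ≤ k + l := by have := C.hk; omega
  have h := cardIio C L hm (L (C.c i))
  have hfil : (Finset.range (k + l)).filter (fun j => (L (C.c j) : ℕ) < (L (C.c i) : ℕ))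
      = Finset.range i := by
    ext j
    simp only [Finset.mem_filter, Finset.mem_range]
    constructor
    · rintro ⟨hj, hlt⟩
      by_contra hij
      push_neg at hij
      rcases eq_or_lt_of_le hij with rfl | hij'
      · omega
      · have := hm _ _ (chain_lt C hij' (by omega))
        rw [Fin.lt_def] at this
        omega
    · intro hj
      have := hm _ _ (chain_lt C hj hi)
      rw [Fin.lt_def] at this
      exact ⟨by omega, this⟩
  rw [hfil, Finset.card_range] at h
  omega

lemma Lz0 (C : Ctx k l X) (L : X ≃ Fin (Fintype.card X))
    (hm : ∀ a b : X, a < b → L a < L b) : (L (C.c 0) : ℕ) = 0 := by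
  have h := lci C L hm (i := 0) (by omega)
  have h1 : L (C.c 0) < L C.u :=
    hm _ _ ((C.horder _ _).2 (Or.inr (Or.inl ⟨0, by omega, rfl, rfl⟩)))
  have h2 : L (C.c 0) < L C.v :=
    hm _ _ ((C.horder _ _).2 (Or.inr (Or.inr (Or.inr ⟨0, by omega, rfl, Or.inl rfl⟩))))
  have h3 : L (C.c 0) < L C.w :=
    hm _ _ ((C.horder _ _).2 (Or.inr (Or.inr (Or.inr ⟨0, by omega, rfl, Or.inr rfl⟩))))
  rw [Fin.lt_def] at h1 h2 h3
  split_ifs at h <;> omega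

lemma unique (C : Ctx k l X) (L L' : X ≃ Fin (Fintype.card X))
    (hm : ∀ a b : X, a < b → L a < L b) (hm' : ∀ a b : X, a < b → L' a < L' b)
    (hu : L C.u = L' C.u) (hv : L C.v = L' C.v) (hw : L C.w = L' C.w) : L = L' := by
  apply Equiv.ext
  intro x
  rcases C.hsurj x with rfl | rfl | rfl | ⟨i, hi, rfl⟩
  · exact hu
  · exact hv
  · exact hw
  · have hp := lci C L hm hi
    have hq := lci C L' hm' hi
    rw [hu, hv, hw] at hp
    have huv : (L' C.u : ℕ) ≠ (L' C.v : ℕ) := fun h => C.huv (L'.injective (Fin.ext h))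
    have huw : (L' C.u : ℕ) ≠ (L' C.w : ℕ) := fun h => C.huw (L'.injective (Fin.ext h))
    have hvw : (L' C.v : ℕ) ≠ (L' C.w : ℕ) := fun h => C.hvw (L'.injective (Fin.ext h))
    have hpa : (L (C.c i) : ℕ) ≠ (L' C.u : ℕ) := fun h => by
      rw [← hu] at h; exact (C.hdisj i hi).1 (L.injective (Fin.ext h))
    have hpb : (L (C.c i) : ℕ) ≠ (L' C.v : ℕ) := fun h => by
      rw [← hv] at h; exact (C.hdisj i hi).2.1 (L.injective (Fin.ext h))
    have hpd : (L (C.c i) : ℕ) ≠ (L' C.w : ℕ) := fun h => by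
      rw [← hw] at h; exact (C.hdisj i hi).2.2 (L.injective (Fin.ext h))
    have hqa : (L' (C.c i) : ℕ) ≠ (L' C.u : ℕ) := fun h =>
      (C.hdisj i hi).1 (L'.injective (Fin.ext h))
    have hqb : (L' (C.c i) : ℕ) ≠ (L' C.v : ℕ) := fun h =>
      (C.hdisj i hi).2.1 (L'.injective (Fin.ext h))
    have hqd : (L' (C.c i) : ℕ) ≠ (L' C.w : ℕ) := fun h =>
      (C.hdisj i hi).2.2 (L'.injective (Fin.ext h))
    exact Fin.ext (s_unique huv huw hvw hpa hpb hpd hqa hqb hqd hp hq)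

lemma card_X (C : Ctx k l X) : Fintype.card X = k + l + 3 := by
  have hk := C.hk; have hl := C.hl
  symm
  have : Fintype.card (Fin (k + l + 3)) = Fintype.card X := by
    apply Fintype.card_of_bijective (f := fun i : Fin (k + l + 3) =>
      if (i : ℕ) < k + l then C.c i else if (i : ℕ) = k + l then C.u else
        if (i : ℕ) = k + l + 1 then C.v else C.w)
    constructor
    · intro i j h
      have hi2 := i.isLt; have hj2 := j.isLt
      simp only [] at h
      split_ifs at h with h1 h2 h2 h3 h1' h4 h4 h5 h5 h6
      all_goals first
        | (exact Fin.ext (C.hchain_inj _ _ (by omega) (by omega) h))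
        | (exact absurd h (C.hdisj _ (by omega)).1)
        | (exact absurd h (C.hdisj _ (by omega)).2.1)
        | (exact absurd h (C.hdisj _ (by omega)).2.2)
        | (exact absurd h.symm (C.hdisj _ (by omega)).1)
        | (exact absurd h.symm (C.hdisj _ (by omega)).2.1)
        | (exact absurd h.symm (C.hdisj _ (by omega)).2.2)
        | (exact Fin.ext (by omega))
        | (exact absurd h C.huv)
        | (exact absurd h C.huw)
        | (exact absurd h C.hvw)
        | (exact absurd h.symm C.huv)
        | (exact absurd h.symm C.huw)
        | (exact absurd h.symm C.hvw)
    · intro x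
      rcases C.hsurj x with h | h | h | ⟨i, hi, h⟩
      · exact ⟨⟨k + l, by omega⟩, by simp [h]⟩
      · exact ⟨⟨k + l + 1, by omega⟩, by simp [h]⟩
      · exact ⟨⟨k + l + 2, by omega⟩, by simp [h, Nat.ne_of_gt, show k+l < k+l+2 by omega]⟩
      · exact ⟨⟨i, by omega⟩, by simp [h, show i < k + l by omega]⟩
  simpa using this


lemma builder (C : Ctx k l X) (a b d : ℕ)
    (hab : a ≠ b) (had : a ≠ d) (hbd : b ≠ d)
    (haN : a < k + l + 3) (hbN : b < k + l + 3) (hdN : d < k + l + 3)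
    (Ha1 : k + ((if b < a then 1 else 0) + (if d < a then 1 else 0)) ≤ a)
    (Ha2 : a ≤ k + 1 + ((if b < a then 1 else 0) + (if d < a then 1 else 0)))
    (Hb : k + 1 + ((if a < b then 1 else 0) + (if d < b then 1 else 0)) ≤ b)
    (Hd : k + 1 + ((if a < d then 1 else 0) + (if b < d then 1 else 0)) ≤ d) :
    ∃ L : X ≃ Fin (Fintype.card X),
      (∀ x y : X, x < y → L x < L y) ∧
      (L C.u : ℕ) = a ∧ (L C.v : ℕ) = b ∧ (L C.w : ℕ) = d ∧
      (∀ (t : ℕ) (ht : t < Fintype.card X), t ≠ a → t ≠ b → t ≠ d →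
        L (C.c (t - ((if a < t then 1 else 0) + (if b < t then 1 else 0)
          + (if d < t then 1 else 0)))) = ⟨t, ht⟩) := by
  have hk := C.hk
  have hl := C.hl
  have hN := card_X C
  set s : ℕ → ℕ := fun p => (if a < p then 1 else 0) + (if b < p then 1 else 0)
    + (if d < p then 1 else 0) with hs
  have hr_le : ∀ p : ℕ, p < k + l + 3 → p ≠ a → p ≠ b → p ≠ d → p - s p ≤ k + l - 1 := by
    intro p hp h1 h2 h3
    simp only [hs]
    split_ifs <;> omega
  set g : Fin (Fintype.card X) → X := fun p =>
    if (p : ℕ) = a then C.u else if (p : ℕ) = b then C.v else if (p : ℕ) = d then C.w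
      else C.c ((p : ℕ) - s (p : ℕ)) with hg
  have hpN : ∀ p : Fin (Fintype.card X), (p : ℕ) < k + l + 3 := fun p => hN ▸ p.isLt
  -- decoding lemmas
  have dec_u : ∀ p : Fin (Fintype.card X), g p = C.u → (p : ℕ) = a := by
    intro p h
    simp only [hg] at h
    split_ifs at h with h1 h2 h3
    · exact h1
    · exact absurd h C.huv.symm
    · exact absurd h C.huw.symm
    · exact absurd h (C.hdisj _ (hr_le _ (hpN p) h1 h2 h3)).1
  have dec_v : ∀ p : Fin (Fintype.card X), g p = C.v → (p : ℕ) = b := by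
    intro p h
    simp only [hg] at h
    split_ifs at h with h1 h2 h3
    · exact absurd h C.huv
    · exact h2
    · exact absurd h C.hvw.symm
    · exact absurd h (C.hdisj _ (hr_le _ (hpN p) h1 h2 h3)).2.1
  have dec_w : ∀ p : Fin (Fintype.card X), g p = C.w → (p : ℕ) = d := by
    intro p h
    simp only [hg] at h
    split_ifs at h with h1 h2 h3
    · exact absurd h C.huw
    · exact absurd h C.hvw
    · exact h3
    · exact absurd h (C.hdisj _ (hr_le _ (hpN p) h1 h2 h3)).2.2
  have dec_c : ∀ (p : Fin (Fintype.card X)) (i : ℕ), i ≤ k + l - 1 → g p = C.c i →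
      (p : ℕ) ≠ a ∧ (p : ℕ) ≠ b ∧ (p : ℕ) ≠ d ∧ (p : ℕ) - s (p : ℕ) = i := by
    intro p i hi h
    simp only [hg] at h
    split_ifs at h with h1 h2 h3
    · exact absurd h.symm (C.hdisj _ hi).1
    · exact absurd h.symm (C.hdisj _ hi).2.1
    · exact absurd h.symm (C.hdisj _ hi).2.2
    · exact ⟨h1, h2, h3, C.hchain_inj _ _ (hr_le _ (hpN p) h1 h2 h3) hi h⟩
  have hginj : Function.Injective g := by
    intro p q h
    simp only [hg] at h
    split_ifs at h with h1 h2 h3 h4 h5 h6 h7 h8 h9 h10 h11 h12 h13 h14 h15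
    all_goals first
      | (exact Fin.ext (by omega))
      | (exact absurd h C.huv)
      | (exact absurd h C.huw)
      | (exact absurd h C.hvw)
      | (exact absurd h.symm C.huv)
      | (exact absurd h.symm C.huw)
      | (exact absurd h.symm C.hvw)
      | (exact absurd h.symm (C.hdisj _ (by
          first
            | exact hr_le _ (hpN q) (by assumption) (by assumption) (by assumption)
            | exact hr_le _ (hpN p) (by assumption) (by assumption) (by assumption))).1)
      | (exact absurd h.symm (C.hdisj _ (by
          first
            | exact hr_le _ (hpN q) (by assumption) (by assumption) (by assumption)
            | exact hr_le _ (hpN p) (by assumption) (by assumption) (by assumption))).2.1)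
      | (exact absurd h.symm (C.hdisj _ (by
          first
            | exact hr_le _ (hpN q) (by assumption) (by assumption) (by assumption)
            | exact hr_le _ (hpN p) (by assumption) (by assumption) (by assumption))).2.2)
      | (exact absurd h (C.hdisj _ (by
          first
            | exact hr_le _ (hpN q) (by assumption) (by assumption) (by assumption)
            | exact hr_le _ (hpN p) (by assumption) (by assumption) (by assumption))).1)
      | (exact absurd h (C.hdisj _ (by
          first
            | exact hr_le _ (hpN q) (by assumption) (by assumption) (by assumption)
            | exact hr_le _ (hpN p) (by assumption) (by assumption) (by assumption))).2.1)
      | (exact absurd h (C.hdisj _ (by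
          first
            | exact hr_le _ (hpN q) (by assumption) (by assumption) (by assumption)
            | exact hr_le _ (hpN p) (by assumption) (by assumption) (by assumption))).2.2)
      | skip
    -- remaining: chain = chain case
    · have hij := C.hchain_inj _ _ (hr_le _ (hpN p) (by assumption) (by assumption) (by assumption))
        (hr_le _ (hpN q) (by assumption) (by assumption) (by assumption)) h
      simp only [hs] at hij
      apply Fin.ext
      by_contra hne
      rcases Nat.lt_trichotomy (p : ℕ) (q : ℕ) with hlt | heq | hgt
      · split_ifs at hij <;> omega
      · exact hne heq
      · split_ifs at hij <;> omega
  have hgbij : Function.Bijective g :=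
    (Fintype.bijective_iff_injective_and_card g).2 ⟨hginj, by simp⟩
  set e := Equiv.ofBijective g hgbij with he
  have hek : ∀ p : Fin (Fintype.card X), e p = g p := fun p => rfl
  refine ⟨e.symm, ?_, ?_, ?_, ?_, ?_⟩
  · -- order preservation
    intro x y hxy
    have hx : g (e.symm x) = x := e.apply_symm_apply x
    have hy : g (e.symm y) = y := e.apply_symm_apply y
    set p := e.symm x
    set q := e.symm y
    rw [Fin.lt_def]
    rcases (C.horder x y).1 hxy with ⟨i, j, hij, hj, hxi, hyj⟩ | ⟨i, hi, hxi, hyj⟩ |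
        ⟨j, hj1, hj2, hxi, hyj⟩ | ⟨i, hi, hxi, hyj⟩
    · obtain ⟨hp1, hp2, hp3, hp4⟩ := dec_c p i (by omega) (hx.trans hxi)
      obtain ⟨hq1, hq2, hq3, hq4⟩ := dec_c q j (by omega) (hy.trans hyj)
      simp only [hs] at hp4 hq4
      split_ifs at hp4 hq4 <;> omega
    · obtain ⟨hp1, hp2, hp3, hp4⟩ := dec_c p i (by omega) (hx.trans hxi)
      have hq1 := dec_u q (hy.trans hyj)
      simp only [hs] at hp4
      split_ifs at hp4 Ha1 <;> omega
    · have hp1 := dec_u p (hx.trans hxi)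
      obtain ⟨hq1, hq2, hq3, hq4⟩ := dec_c q j (by omega) (hy.trans hyj)
      simp only [hs] at hq4
      split_ifs at hq4 Ha2 <;> omega
    · obtain ⟨hp1, hp2, hp3, hp4⟩ := dec_c p i (by omega) (hx.trans hxi)
      simp only [hs] at hp4
      rcases hyj with rfl | rfl
      · have hq1 := dec_v q hy
        split_ifs at hp4 Hb <;> omega
      · have hq1 := dec_w q hy
        split_ifs at hp4 Hd <;> omega
  · have : e ⟨a, by omega⟩ = C.u := by
      rw [hek]
      simp [hg]
    rw [← this, Equiv.symm_apply_apply]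
  · have : e ⟨b, by omega⟩ = C.v := by
      rw [hek]
      simp [hg, hab.symm]
    rw [← this, Equiv.symm_apply_apply]
  · have : e ⟨d, by omega⟩ = C.w := by
      rw [hek]
      simp [hg, had.symm, hbd.symm]
    rw [← this, Equiv.symm_apply_apply]
  · intro t ht h1 h2 h3
    have : e ⟨t, ht⟩ = C.c (t - s t) := by
      rw [hek]
      simp only [hg]
      rw [if_neg h1, if_neg h2, if_neg h3]
    rw [show ((if a < t then 1 else 0) + (if b < t then 1 else 0)
      + (if d < t then 1 else 0)) = s t from rfl, ← this, Equiv.symm_apply_apply]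


lemma Lz1_eq (C : Ctx k l X) (L : X ≃ Fin (Fintype.card X))
    (hm : ∀ a b : X, a < b → L a < L b) : (L C.z₁ : ℕ) = 0 := by
  rw [← C.hc0]; exact Lz0 C L hm

lemma z2_lt_v (C : Ctx k l X) (L : X ≃ Fin (Fintype.card X))
    (hm : ∀ a b : X, a < b → L a < L b) : (L C.z₂ : ℕ) < (L C.v : ℕ) := by
  have h := hm _ _ ((C.horder _ _).2 (Or.inr (Or.inr (Or.inr ⟨k, le_rfl, C.hck.symm, Or.inl rfl⟩))))
  rwa [Fin.lt_def] at h

lemma z2_lt_w (C : Ctx k l X) (L : X ≃ Fin (Fintype.card X))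
    (hm : ∀ a b : X, a < b → L a < L b) : (L C.z₂ : ℕ) < (L C.w : ℕ) := by
  have h := hm _ _ ((C.horder _ _).2 (Or.inr (Or.inr (Or.inr ⟨k, le_rfl, C.hck.symm, Or.inr rfl⟩))))
  rwa [Fin.lt_def] at h

lemma u_ne_z2 (C : Ctx k l X) (L : X ≃ Fin (Fintype.card X)) :
    (L C.u : ℕ) ≠ (L C.z₂ : ℕ) := by
  intro h
  have hkl : k ≤ k + l - 1 := by have := C.hl; omega
  exact (C.hdisj k hkl).1 (C.hck.trans (L.injective (Fin.ext h)).symm)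

lemma u_ne_z3 (C : Ctx k l X) (L : X ≃ Fin (Fintype.card X)) :
    (L C.u : ℕ) ≠ (L C.z₃ : ℕ) := fun h =>
  (C.hdisj (k + l - 1) le_rfl).1 (C.hctop.trans (L.injective (Fin.ext h)).symm)

lemma v_ne_z3 (C : Ctx k l X) (L : X ≃ Fin (Fintype.card X)) :
    (L C.v : ℕ) ≠ (L C.z₃ : ℕ) := fun h =>
  (C.hdisj (k + l - 1) le_rfl).2.1 (C.hctop.trans (L.injective (Fin.ext h)).symm)

lemma w_ne_z3 (C : Ctx k l X) (L : X ≃ Fin (Fintype.card X)) :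
    (L C.w : ℕ) ≠ (L C.z₃ : ℕ) := fun h =>
  (C.hdisj (k + l - 1) le_rfl).2.2 (C.hctop.trans (L.injective (Fin.ext h)).symm)

lemma vw_ne (C : Ctx k l X) (L : X ≃ Fin (Fintype.card X)) :
    (L C.v : ℕ) ≠ (L C.w : ℕ) := fun h => C.hvw (L.injective (Fin.ext h))

lemma k_le_u (C : Ctx k l X) (L : X ≃ Fin (Fintype.card X))
    (hm : ∀ a b : X, a < b → L a < L b) : k ≤ (L C.u : ℕ) := by
  have hk := C.hk; have hl := C.hl
  have h := cardIio C L hm (L C.u)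
  have hsub : Finset.range k ⊆
      (Finset.range (k + l)).filter (fun j => (L (C.c j) : ℕ) < (L C.u : ℕ)) := by
    intro j hj
    simp only [Finset.mem_range] at hj
    simp only [Finset.mem_filter, Finset.mem_range]
    have h1 : C.c j < C.u := (C.horder _ _).2 (Or.inr (Or.inl ⟨j, by omega, rfl, rfl⟩))
    have h2 := hm _ _ h1
    rw [Fin.lt_def] at h2
    exact ⟨by omega, h2⟩
  have h3 := Finset.card_le_card hsub
  rw [Finset.card_range] at h3
  omega

lemma u_eq_rank (C : Ctx k l X) (L : X ≃ Fin (Fintype.card X))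
    (hm : ∀ a b : X, a < b → L a < L b) (hz2 : (L C.z₂ : ℕ) = k)
    (ha : k + 1 ≤ (L C.u : ℕ)) :
    (L C.u : ℕ) = (k + 1) + ((if (L C.v : ℕ) < (L C.u : ℕ) then 1 else 0)
      + (if (L C.w : ℕ) < (L C.u : ℕ) then 1 else 0)) := by
  have hk := C.hk; have hl := C.hl
  have h := cardIio C L hm (L C.u)
  have hfil : (Finset.range (k + l)).filter (fun j => (L (C.c j) : ℕ) < (L C.u : ℕ))
      = Finset.range (k + 1) := by
    ext j
    simp only [Finset.mem_filter, Finset.mem_range]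
    constructor
    · rintro ⟨hj, hlt⟩
      by_contra hc
      push_neg at hc
      have h1 : C.u < C.c (k + 1) :=
        (C.horder _ _).2 (Or.inr (Or.inr (Or.inl ⟨k + 1, le_rfl, by omega, rfl, rfl⟩)))
      have h1' := hm _ _ h1
      rw [Fin.lt_def] at h1'
      have h2 : (L (C.c (k + 1)) : ℕ) ≤ (L (C.c j) : ℕ) := by
        rcases Nat.eq_or_lt_of_le hc with heq | hlt2
        · rw [heq]
        · have := hm _ _ (chain_lt C hlt2 (by omega))
          rw [Fin.lt_def] at this
          omega
      omega
    · intro hj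
      have h2 : (L (C.c j) : ℕ) ≤ (L (C.c k) : ℕ) := by
        rcases Nat.eq_or_lt_of_le (Nat.lt_succ_iff.mp hj) with heq | hlt2
        · rw [heq]
        · have := hm _ _ (chain_lt C hlt2 (by have := C.hl; omega))
          rw [Fin.lt_def] at this
          omega
      rw [C.hck, hz2] at h2
      exact ⟨by omega, by omega⟩
  rw [hfil, Finset.card_range, if_neg (lt_irrefl _)] at h
  omega

lemma fwd1 (C : Ctx k l X) (L : X ≃ Fin (Fintype.card X))
    (hm : ∀ a b : X, a < b → L a < L b)
    (h2 : (L C.z₂ : ℕ) = (L C.z₁ : ℕ) + k) (h3 : (L C.z₃ : ℕ) = (L C.z₂ : ℕ) + (l + 2)) :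
    ((L C.u : ℕ) ≠ (L C.v : ℕ) ∧ (L C.u : ℕ) ≠ (L C.w : ℕ) ∧ (L C.v : ℕ) ≠ (L C.w : ℕ)) ∧
    (k + 1 ≤ (L C.v : ℕ) ∧ (L C.v : ℕ) ≤ k + l + 1) ∧
    (k + 1 ≤ (L C.w : ℕ) ∧ (L C.w : ℕ) ≤ k + l + 1) ∧
    (L C.u : ℕ) = (k + 1) + ((if (L C.v : ℕ) < (L C.u : ℕ) then 1 else 0)
      + (if (L C.w : ℕ) < (L C.u : ℕ) then 1 else 0)) := by
  have hk := C.hk; have hl := C.hl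
  have hz1 := Lz1_eq C L hm
  have hz2 : (L C.z₂ : ℕ) = k := by omega
  have hz3 : (L C.z₃ : ℕ) = k + l + 2 := by omega
  have hbv := z2_lt_v C L hm
  have hbw := z2_lt_w C L hm
  have hune : (L C.u : ℕ) ≠ k := by have := u_ne_z2 C L; omega
  have hlk := lci C L hm (i := k) (by omega)
  rw [C.hck, hz2] at hlk
  have ha1 : k + 1 ≤ (L C.u : ℕ) := by split_ifs at hlk <;> omega
  have hlz := lci C L hm (i := k + l - 1) le_rfl
  rw [C.hctop, hz3] at hlz
  have huv : (L C.u : ℕ) ≠ (L C.v : ℕ) := fun h => C.huv (L.injective (Fin.ext h))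
  have huw : (L C.u : ℕ) ≠ (L C.w : ℕ) := fun h => C.huw (L.injective (Fin.ext h))
  refine ⟨⟨huv, huw, vw_ne C L⟩, ⟨by omega, ?_⟩, ⟨by omega, ?_⟩, u_eq_rank C L hm hz2 ha1⟩ <;>
    (split_ifs at hlz <;> omega)

lemma fwd2 (C : Ctx k l X) (L : X ≃ Fin (Fintype.card X))
    (hm : ∀ a b : X, a < b → L a < L b)
    (h2 : (L C.z₂ : ℕ) = (L C.z₁ : ℕ) + k) (h3 : (L C.z₃ : ℕ) = (L C.z₂ : ℕ) + (l + 1)) :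
    ((L C.u : ℕ) ≠ (L C.v : ℕ) ∧ (L C.u : ℕ) ≠ (L C.w : ℕ)) ∧
    (L C.u : ℕ) = (k + 1) + ((if (L C.v : ℕ) < (L C.u : ℕ) then 1 else 0)
      + (if (L C.w : ℕ) < (L C.u : ℕ) then 1 else 0)) ∧
    (((L C.v : ℕ) = k + l + 2 ∧ k + 1 ≤ (L C.w : ℕ) ∧ (L C.w : ℕ) ≤ k + l) ∨
     ((L C.w : ℕ) = k + l + 2 ∧ k + 1 ≤ (L C.v : ℕ) ∧ (L C.v : ℕ) ≤ k + l)) := by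
  have hk := C.hk; have hl := C.hl; have hN := card_X C
  have hz1 := Lz1_eq C L hm
  have hz2 : (L C.z₂ : ℕ) = k := by omega
  have hz3 : (L C.z₃ : ℕ) = k + l + 1 := by omega
  have hbv := z2_lt_v C L hm
  have hbw := z2_lt_w C L hm
  have hune : (L C.u : ℕ) ≠ k := by have := u_ne_z2 C L; omega
  have hlk := lci C L hm (i := k) (by omega)
  rw [C.hck, hz2] at hlk
  have ha1 : k + 1 ≤ (L C.u : ℕ) := by split_ifs at hlk <;> omega
  have hq := u_eq_rank C L hm hz2 ha1
  have hune3 : (L C.u : ℕ) ≠ k + l + 1 := by have := u_ne_z3 C L; omega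
  have hvne3 : (L C.v : ℕ) ≠ k + l + 1 := by have := v_ne_z3 C L; omega
  have hwne3 : (L C.w : ℕ) ≠ k + l + 1 := by have := w_ne_z3 C L; omega
  have hvN : (L C.v : ℕ) < k + l + 3 := by rw [← hN]; exact (L C.v).isLt
  have hwN : (L C.w : ℕ) < k + l + 3 := by rw [← hN]; exact (L C.w).isLt
  have huv : (L C.u : ℕ) ≠ (L C.v : ℕ) := fun h => C.huv (L.injective (Fin.ext h))
  have huw : (L C.u : ℕ) ≠ (L C.w : ℕ) := fun h => C.huw (L.injective (Fin.ext h))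
  have hvw := vw_ne C L
  have hlz := lci C L hm (i := k + l - 1) le_rfl
  rw [C.hctop, hz3] at hlz
  have hau : (L C.u : ℕ) < k + l + 1 := by split_ifs at hq <;> omega
  refine ⟨⟨huv, huw⟩, hq, ?_⟩
  split_ifs at hlz with hc1 hc2 hc3 <;> first
    | omega
    | (left; omega)
    | (right; omega)

lemma fwd3 (C : Ctx k l X) (L : X ≃ Fin (Fintype.card X))
    (hm : ∀ a b : X, a < b → L a < L b)
    (h2 : (L C.z₂ : ℕ) = (L C.z₁ : ℕ) + (k + 1)) (h3 : (L C.z₃ : ℕ) = (L C.z₂ : ℕ) + l) :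
    (L C.u : ℕ) = k ∧
    (((L C.v : ℕ) = k + l + 2 ∧ k + 2 ≤ (L C.w : ℕ) ∧ (L C.w : ℕ) ≤ k + l) ∨
     ((L C.w : ℕ) = k + l + 2 ∧ k + 2 ≤ (L C.v : ℕ) ∧ (L C.v : ℕ) ≤ k + l)) := by
  have hk := C.hk; have hl := C.hl; have hN := card_X C
  have hz1 := Lz1_eq C L hm
  have hz2 : (L C.z₂ : ℕ) = k + 1 := by omega
  have hz3 : (L C.z₃ : ℕ) = k + l + 1 := by omega
  have hbv := z2_lt_v C L hm
  have hbw := z2_lt_w C L hm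
  have hlk := lci C L hm (i := k) (by omega)
  rw [C.hck, hz2] at hlk
  have hage := k_le_u C L hm
  have ha : (L C.u : ℕ) = k := by split_ifs at hlk <;> omega
  have hvne3 : (L C.v : ℕ) ≠ k + l + 1 := by have := v_ne_z3 C L; omega
  have hwne3 : (L C.w : ℕ) ≠ k + l + 1 := by have := w_ne_z3 C L; omega
  have hvN : (L C.v : ℕ) < k + l + 3 := by rw [← hN]; exact (L C.v).isLt
  have hwN : (L C.w : ℕ) < k + l + 3 := by rw [← hN]; exact (L C.w).isLt
  have hvw := vw_ne C L
  have hlz := lci C L hm (i := k + l - 1) le_rfl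
  rw [C.hctop, hz3] at hlz
  refine ⟨ha, ?_⟩
  split_ifs at hlz with hc1 hc2 hc3 <;> first
    | omega
    | (left; omega)
    | (right; omega)

lemma fwd4 (C : Ctx k l X) (L : X ≃ Fin (Fintype.card X))
    (hm : ∀ a b : X, a < b → L a < L b)
    (h2 : (L C.z₂ : ℕ) = (L C.z₁ : ℕ) + (k + 1)) (h3 : (L C.z₃ : ℕ) = (L C.z₂ : ℕ) + (l + 1)) :
    (L C.u : ℕ) = k ∧ (L C.v : ℕ) ≠ (L C.w : ℕ) ∧
    (k + 2 ≤ (L C.v : ℕ) ∧ (L C.v : ℕ) ≤ k + l + 1) ∧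
    (k + 2 ≤ (L C.w : ℕ) ∧ (L C.w : ℕ) ≤ k + l + 1) := by
  have hk := C.hk; have hl := C.hl
  have hz1 := Lz1_eq C L hm
  have hz2 : (L C.z₂ : ℕ) = k + 1 := by omega
  have hz3 : (L C.z₃ : ℕ) = k + l + 2 := by omega
  have hbv := z2_lt_v C L hm
  have hbw := z2_lt_w C L hm
  have hlk := lci C L hm (i := k) (by omega)
  rw [C.hck, hz2] at hlk
  have hage := k_le_u C L hm
  have ha : (L C.u : ℕ) = k := by split_ifs at hlk <;> omega
  have hlz := lci C L hm (i := k + l - 1) le_rfl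
  rw [C.hctop, hz3] at hlz
  refine ⟨ha, vw_ne C L, ⟨by omega, ?_⟩, ⟨by omega, ?_⟩⟩ <;>
    (split_ifs at hlz <;> omega)

lemma bwd4 (C : Ctx k l X) (a b d : ℕ) (ha : a = k) (hbd : b ≠ d)
    (hb1 : k + 2 ≤ b) (hb2 : b ≤ k + l + 1) (hd1 : k + 2 ≤ d) (hd2 : d ≤ k + l + 1) :
    ∃ L : X ≃ Fin (Fintype.card X), (∀ x y : X, x < y → L x < L y) ∧
      (L C.z₁ : ℕ) = 0 ∧ (L C.z₂ : ℕ) = k + 1 ∧ (L C.z₃ : ℕ) = k + l + 2 ∧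
      (L C.u : ℕ) = a ∧ (L C.v : ℕ) = b ∧ (L C.w : ℕ) = d := by
  have hk := C.hk; have hl := C.hl; have hN := card_X C
  obtain ⟨L, hm, hu, hv, hw, hch⟩ := builder C a b d (by omega) (by omega) (by omega)
    (by omega) (by omega) (by omega)
    (by split_ifs <;> omega) (by split_ifs <;> omega)
    (by split_ifs <;> omega) (by split_ifs <;> omega)
  refine ⟨L, hm, Lz1_eq C L hm, ?_, ?_, hu, hv, hw⟩
  · have h := hch (k + 1) (by omega) (by omega) (by omega) (by omega)
    rw [if_pos (by omega), if_neg (by omega), if_neg (by omega)] at h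
    norm_num at h
    rw [C.hck] at h
    rw [h]
  · have h := hch (k + l + 2) (by omega) (by omega) (by omega) (by omega)
    rw [if_pos (by omega), if_pos (by omega), if_pos (by omega)] at h
    have he : k + l + 2 - (1 + 1 + 1) = k + l - 1 := by omega
    rw [he, C.hctop] at h
    rw [h]

lemma bwd3 (C : Ctx k l X) (a b d : ℕ) (ha : a = k)
    (hor : (b = k + l + 2 ∧ k + 2 ≤ d ∧ d ≤ k + l) ∨ (d = k + l + 2 ∧ k + 2 ≤ b ∧ b ≤ k + l)) :
    ∃ L : X ≃ Fin (Fintype.card X), (∀ x y : X, x < y → L x < L y) ∧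
      (L C.z₁ : ℕ) = 0 ∧ (L C.z₂ : ℕ) = k + 1 ∧ (L C.z₃ : ℕ) = k + l + 1 ∧
      (L C.u : ℕ) = a ∧ (L C.v : ℕ) = b ∧ (L C.w : ℕ) = d := by
  have hk := C.hk; have hl := C.hl; have hN := card_X C
  have hbd : b ≠ d := by omega
  obtain ⟨L, hm, hu, hv, hw, hch⟩ := builder C a b d (by omega) (by omega) (by omega)
    (by omega) (by omega) (by omega)
    (by split_ifs <;> omega) (by split_ifs <;> omega)
    (by split_ifs <;> omega) (by split_ifs <;> omega)
  refine ⟨L, hm, Lz1_eq C L hm, ?_, ?_, hu, hv, hw⟩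
  · have h := hch (k + 1) (by omega) (by omega) (by omega) (by omega)
    rw [if_pos (by omega), if_neg (by omega), if_neg (by omega)] at h
    norm_num at h
    rw [C.hck] at h
    rw [h]
  · have h := hch (k + l + 1) (by omega) (by omega) (by omega) (by omega)
    rcases hor with ⟨hb, hd⟩ | ⟨hd, hb⟩
    · rw [if_pos (by omega), if_neg (by omega), if_pos (by omega)] at h
      have he : k + l + 1 - (1 + 0 + 1) = k + l - 1 := by omega
      rw [he, C.hctop] at h
      rw [h]
    · rw [if_pos (by omega), if_pos (by omega), if_neg (by omega)] at h
      have he : k + l + 1 - (1 + 1 + 0) = k + l - 1 := by omega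
      rw [he, C.hctop] at h
      rw [h]

lemma bwd1 (C : Ctx k l X) (a b d : ℕ) (hab : a ≠ b) (had : a ≠ d) (hbd : b ≠ d)
    (hb1 : k + 1 ≤ b) (hb2 : b ≤ k + l + 1) (hd1 : k + 1 ≤ d) (hd2 : d ≤ k + l + 1)
    (haeq : a = (k + 1) + ((if b < a then 1 else 0) + (if d < a then 1 else 0))) :
    ∃ L : X ≃ Fin (Fintype.card X), (∀ x y : X, x < y → L x < L y) ∧
      (L C.z₁ : ℕ) = 0 ∧ (L C.z₂ : ℕ) = k ∧ (L C.z₃ : ℕ) = k + l + 2 ∧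
      (L C.u : ℕ) = a ∧ (L C.v : ℕ) = b ∧ (L C.w : ℕ) = d := by
  have hk := C.hk; have hl := C.hl; have hN := card_X C
  have ha3 : k + 1 ≤ a ∧ a ≤ k + 3 := by split_ifs at haeq <;> omega
  obtain ⟨L, hm, hu, hv, hw, hch⟩ := builder C a b d hab had hbd
    (by omega) (by omega) (by omega)
    (by split_ifs at haeq ⊢ <;> omega) (by split_ifs at haeq ⊢ <;> omega)
    (by split_ifs at haeq ⊢ <;> omega) (by split_ifs at haeq ⊢ <;> omega)
  refine ⟨L, hm, Lz1_eq C L hm, ?_, ?_, hu, hv, hw⟩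
  · have h := hch k (by omega) (by omega) (by omega) (by omega)
    rw [if_neg (by omega), if_neg (by omega), if_neg (by omega)] at h
    norm_num at h
    rw [C.hck] at h
    rw [h]
  · have haup : a ≤ k + l + 1 := by split_ifs at haeq <;> omega
    have h := hch (k + l + 2) (by omega) (by omega) (by omega) (by omega)
    rw [if_pos (by omega), if_pos (by omega), if_pos (by omega)] at h
    have he : k + l + 2 - (1 + 1 + 1) = k + l - 1 := by omega
    rw [he, C.hctop] at h
    rw [h]

lemma bwd2 (C : Ctx k l X) (a b d : ℕ) (hab : a ≠ b) (had : a ≠ d)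
    (haeq : a = (k + 1) + ((if b < a then 1 else 0) + (if d < a then 1 else 0)))
    (hor : (b = k + l + 2 ∧ k + 1 ≤ d ∧ d ≤ k + l) ∨ (d = k + l + 2 ∧ k + 1 ≤ b ∧ b ≤ k + l)) :
    ∃ L : X ≃ Fin (Fintype.card X), (∀ x y : X, x < y → L x < L y) ∧
      (L C.z₁ : ℕ) = 0 ∧ (L C.z₂ : ℕ) = k ∧ (L C.z₃ : ℕ) = k + l + 1 ∧
      (L C.u : ℕ) = a ∧ (L C.v : ℕ) = b ∧ (L C.w : ℕ) = d := by
  have hk := C.hk; have hl := C.hl; have hN := card_X C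
  have hbd : b ≠ d := by omega
  have ha3 : k + 1 ≤ a ∧ a ≤ k + 3 := by split_ifs at haeq <;> omega
  obtain ⟨L, hm, hu, hv, hw, hch⟩ := builder C a b d hab had hbd
    (by omega) (by omega) (by omega)
    (by split_ifs at haeq ⊢ <;> omega) (by split_ifs at haeq ⊢ <;> omega)
    (by split_ifs at haeq ⊢ <;> omega) (by split_ifs at haeq ⊢ <;> omega)
  refine ⟨L, hm, Lz1_eq C L hm, ?_, ?_, hu, hv, hw⟩
  · have h := hch k (by omega) (by omega) (by omega) (by omega)
    rw [if_neg (by omega), if_neg (by omega), if_neg (by omega)] at h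
    norm_num at h
    rw [C.hck] at h
    rw [h]
  · have haup : a ≤ k + l := by split_ifs at haeq <;> omega
    have h := hch (k + l + 1) (by omega) (by omega) (by omega) (by omega)
    rcases hor with ⟨hb, hd⟩ | ⟨hd, hb⟩
    · rw [if_pos (by omega), if_neg (by omega), if_pos (by omega)] at h
      have he : k + l + 1 - (1 + 0 + 1) = k + l - 1 := by omega
      rw [he, C.hctop] at h
      rw [h]
    · rw [if_pos (by omega), if_pos (by omega), if_neg (by omega)] at h
      have he : k + l + 1 - (1 + 1 + 0) = k + l - 1 := by omega
      rw [he, C.hctop] at h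
      rw [h]

lemma card_offdiag (m : ℕ) : Nat.card {x : Fin m × Fin m // x.1 ≠ x.2} = m * m - m := by
  rw [Nat.card_eq_fintype_card, Fintype.card_subtype]
  have h : (Finset.univ.filter fun x : Fin m × Fin m => x.1 ≠ x.2) = Finset.univ.offDiag := by
    ext x
    simp [Finset.mem_offDiag]
  rw [h, Finset.offDiag_card, Finset.card_univ, Fintype.card_fin]

lemma count4 (C : Ctx k l X) :
    Nat.card {L : X ≃ Fin (Fintype.card X) // (∀ x y : X, x < y → L x < L y) ∧
      (L C.z₂ : ℕ) = (L C.z₁ : ℕ) + (k + 1) ∧ (L C.z₃ : ℕ) = (L C.z₂ : ℕ) + (l + 1)}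
      = l * (l - 1) := by
  have hk := C.hk; have hl := C.hl
  have e1 : {L : X ≃ Fin (Fintype.card X) // (∀ x y : X, x < y → L x < L y) ∧
      (L C.z₂ : ℕ) = (L C.z₁ : ℕ) + (k + 1) ∧ (L C.z₃ : ℕ) = (L C.z₂ : ℕ) + (l + 1)} ≃
      {t : ℕ × ℕ × ℕ // t.1 = k ∧ t.2.1 ≠ t.2.2 ∧
        (k + 2 ≤ t.2.1 ∧ t.2.1 ≤ k + l + 1) ∧ (k + 2 ≤ t.2.2 ∧ t.2.2 ≤ k + l + 1)} := by
    refine Equiv.ofBijective (fun L => ⟨((L.1 C.u : ℕ), (L.1 C.v : ℕ), (L.1 C.w : ℕ)),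
      fwd4 C L.1 L.2.1 L.2.2.1 L.2.2.2⟩) ⟨?_, ?_⟩
    · intro L1 L2 h
      simp only [Subtype.mk.injEq, Prod.mk.injEq] at h
      exact Subtype.ext (unique C L1.1 L2.1 L1.2.1 L2.2.1
        (Fin.ext h.1) (Fin.ext h.2.1) (Fin.ext h.2.2))
    · rintro ⟨⟨a, b, d⟩, ha, hbd, ⟨hb1, hb2⟩, hd1, hd2⟩
      obtain ⟨L, hm, hz1, hz2, hz3, hu, hv, hw⟩ := bwd4 C a b d ha hbd hb1 hb2 hd1 hd2
      exact ⟨⟨L, hm, by omega, by omega⟩, Subtype.ext (by simp [hu, hv, hw])⟩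
  have e2 : {t : ℕ × ℕ × ℕ // t.1 = k ∧ t.2.1 ≠ t.2.2 ∧
        (k + 2 ≤ t.2.1 ∧ t.2.1 ≤ k + l + 1) ∧ (k + 2 ≤ t.2.2 ∧ t.2.2 ≤ k + l + 1)} ≃
      {x : Fin l × Fin l // x.1 ≠ x.2} :=
    { toFun := fun t => ⟨(⟨t.1.2.1 - (k + 2), by have h := t.2; omega⟩,
        ⟨t.1.2.2 - (k + 2), by have h := t.2; omega⟩), by
          have h := t.2
          intro hc
          rw [Fin.mk.injEq] at hc
          omega⟩
      invFun := fun x => ⟨(k, (k + 2 + (x.1.1 : ℕ), k + 2 + (x.1.2 : ℕ))), by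
        have h1 := x.1.1.isLt
        have h2 := x.1.2.isLt
        dsimp only
        refine ⟨rfl, ?_, ⟨by omega, by omega⟩, by omega, by omega⟩
        intro hc
        exact x.2 (Fin.ext (by omega))⟩
      left_inv := by
        rintro ⟨⟨a, b, d⟩, ha, hbd, ⟨hb1, hb2⟩, hd1, hd2⟩
        dsimp only at ha hbd hb1 hb2 hd1 hd2
        apply Subtype.ext
        simp only [Prod.mk.injEq]
        omega
      right_inv := by
        rintro ⟨⟨i, j⟩, hij⟩
        apply Subtype.ext
        dsimp only
        simp only [Prod.mk.injEq]
        refine ⟨Fin.ext ?_, Fin.ext ?_⟩ <;> simp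
    }
  rw [Nat.card_congr (e1.trans e2), card_offdiag]
  obtain ⟨m, rfl⟩ := Nat.exists_eq_add_of_le hl
  have : (2 + m) * (2 + m) = (2 + m) * (2 + m - 1) + (2 + m) := by
    have h2 : 2 + m - 1 = 1 + m := by omega
    rw [h2]; ring
  omega

lemma count1 (C : Ctx k l X) :
    Nat.card {L : X ≃ Fin (Fintype.card X) // (∀ x y : X, x < y → L x < L y) ∧
      (L C.z₂ : ℕ) = (L C.z₁ : ℕ) + k ∧ (L C.z₃ : ℕ) = (L C.z₂ : ℕ) + (l + 2)}
      = (l + 1) * l := by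
  have hk := C.hk; have hl := C.hl
  have e1 : {L : X ≃ Fin (Fintype.card X) // (∀ x y : X, x < y → L x < L y) ∧
      (L C.z₂ : ℕ) = (L C.z₁ : ℕ) + k ∧ (L C.z₃ : ℕ) = (L C.z₂ : ℕ) + (l + 2)} ≃
      {t : ℕ × ℕ × ℕ // (t.1 ≠ t.2.1 ∧ t.1 ≠ t.2.2 ∧ t.2.1 ≠ t.2.2) ∧
        (k + 1 ≤ t.2.1 ∧ t.2.1 ≤ k + l + 1) ∧ (k + 1 ≤ t.2.2 ∧ t.2.2 ≤ k + l + 1) ∧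
        t.1 = (k + 1) + ((if t.2.1 < t.1 then 1 else 0) + (if t.2.2 < t.1 then 1 else 0))} := by
    refine Equiv.ofBijective (fun L => ⟨((L.1 C.u : ℕ), (L.1 C.v : ℕ), (L.1 C.w : ℕ)),
      fwd1 C L.1 L.2.1 L.2.2.1 L.2.2.2⟩) ⟨?_, ?_⟩
    · intro L1 L2 h
      simp only [Subtype.mk.injEq, Prod.mk.injEq] at h
      exact Subtype.ext (unique C L1.1 L2.1 L1.2.1 L2.2.1
        (Fin.ext h.1) (Fin.ext h.2.1) (Fin.ext h.2.2))
    · rintro ⟨⟨a, b, d⟩, ⟨hab, had, hbd⟩, ⟨hb1, hb2⟩, ⟨hd1, hd2⟩, haeq⟩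
      obtain ⟨L, hm, hz1, hz2, hz3, hu, hv, hw⟩ :=
        bwd1 C a b d hab had hbd hb1 hb2 hd1 hd2 haeq
      exact ⟨⟨L, hm, by omega, by omega⟩, Subtype.ext (by simp [hu, hv, hw])⟩
  have e2 : {t : ℕ × ℕ × ℕ // (t.1 ≠ t.2.1 ∧ t.1 ≠ t.2.2 ∧ t.2.1 ≠ t.2.2) ∧
        (k + 1 ≤ t.2.1 ∧ t.2.1 ≤ k + l + 1) ∧ (k + 1 ≤ t.2.2 ∧ t.2.2 ≤ k + l + 1) ∧
        t.1 = (k + 1) + ((if t.2.1 < t.1 then 1 else 0) + (if t.2.2 < t.1 then 1 else 0))} ≃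
      {x : Fin (l + 1) × Fin (l + 1) // x.1 ≠ x.2} :=
    { toFun := fun t => ⟨(⟨t.1.2.1 - (k + 1), by obtain ⟨-, h2, h3, -⟩ := t.2; omega⟩,
        ⟨t.1.2.2 - (k + 1), by obtain ⟨-, h2, h3, -⟩ := t.2; omega⟩), by
          obtain ⟨h1, h2, h3, -⟩ := t.2
          intro hc
          rw [Fin.mk.injEq] at hc
          omega⟩
      invFun := fun x => ⟨(if (x.1.1 : ℕ) = 0 ∨ (x.1.2 : ℕ) = 0 then
          (if (x.1.1 : ℕ) = 1 ∨ (x.1.2 : ℕ) = 1 then k + 3 else k + 2) else k + 1,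
          (k + 1 + (x.1.1 : ℕ), k + 1 + (x.1.2 : ℕ))), by
        have h1 := x.1.1.isLt
        have h2 := x.1.2.isLt
        have hne : (x.1.1 : ℕ) ≠ (x.1.2 : ℕ) := fun hc => x.2 (Fin.ext hc)
        dsimp only
        refine ⟨⟨?_, ?_, ?_⟩, ⟨?_, ?_⟩, ⟨?_, ?_⟩, ?_⟩ <;> first | (split_ifs <;> omega) | omega⟩
      left_inv := by
        rintro ⟨⟨a, b, d⟩, ⟨hab, had, hbd⟩, ⟨hb1, hb2⟩, ⟨hd1, hd2⟩, haeq⟩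
        dsimp only at hab had hbd hb1 hb2 hd1 hd2 haeq
        apply Subtype.ext
        dsimp only
        simp only [Prod.mk.injEq]
        split_ifs at haeq ⊢ <;> omega
      right_inv := by
        rintro ⟨⟨i, j⟩, hij⟩
        apply Subtype.ext
        dsimp only
        simp only [Prod.mk.injEq]
        refine ⟨Fin.ext ?_, Fin.ext ?_⟩ <;> simp
    }
  rw [Nat.card_congr (e1.trans e2), card_offdiag]
  obtain ⟨m, rfl⟩ := Nat.exists_eq_add_of_le hl
  have h : (2 + m + 1) * (2 + m + 1) = (2 + m + 1) * (2 + m) + (2 + m + 1) := by ring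
  omega

lemma count2 (C : Ctx k l X) :
    Nat.card {L : X ≃ Fin (Fintype.card X) // (∀ x y : X, x < y → L x < L y) ∧
      (L C.z₂ : ℕ) = (L C.z₁ : ℕ) + k ∧ (L C.z₃ : ℕ) = (L C.z₂ : ℕ) + (l + 1)}
      = 2 * l := by
  have hk := C.hk; have hl := C.hl
  have e1 : {L : X ≃ Fin (Fintype.card X) // (∀ x y : X, x < y → L x < L y) ∧
      (L C.z₂ : ℕ) = (L C.z₁ : ℕ) + k ∧ (L C.z₃ : ℕ) = (L C.z₂ : ℕ) + (l + 1)} ≃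
      {t : ℕ × ℕ × ℕ // (t.1 ≠ t.2.1 ∧ t.1 ≠ t.2.2) ∧
        t.1 = (k + 1) + ((if t.2.1 < t.1 then 1 else 0) + (if t.2.2 < t.1 then 1 else 0)) ∧
        ((t.2.1 = k + l + 2 ∧ k + 1 ≤ t.2.2 ∧ t.2.2 ≤ k + l) ∨
         (t.2.2 = k + l + 2 ∧ k + 1 ≤ t.2.1 ∧ t.2.1 ≤ k + l))} := by
    refine Equiv.ofBijective (fun L => ⟨((L.1 C.u : ℕ), (L.1 C.v : ℕ), (L.1 C.w : ℕ)),
      fwd2 C L.1 L.2.1 L.2.2.1 L.2.2.2⟩) ⟨?_, ?_⟩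
    · intro L1 L2 h
      simp only [Subtype.mk.injEq, Prod.mk.injEq] at h
      exact Subtype.ext (unique C L1.1 L2.1 L1.2.1 L2.2.1
        (Fin.ext h.1) (Fin.ext h.2.1) (Fin.ext h.2.2))
    · rintro ⟨⟨a, b, d⟩, ⟨hab, had⟩, haeq, hor⟩
      obtain ⟨L, hm, hz1, hz2, hz3, hu, hv, hw⟩ := bwd2 C a b d hab had haeq hor
      exact ⟨⟨L, hm, by omega, by omega⟩, Subtype.ext (by simp [hu, hv, hw])⟩
  have e2 : {t : ℕ × ℕ × ℕ // (t.1 ≠ t.2.1 ∧ t.1 ≠ t.2.2) ∧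
        t.1 = (k + 1) + ((if t.2.1 < t.1 then 1 else 0) + (if t.2.2 < t.1 then 1 else 0)) ∧
        ((t.2.1 = k + l + 2 ∧ k + 1 ≤ t.2.2 ∧ t.2.2 ≤ k + l) ∨
         (t.2.2 = k + l + 2 ∧ k + 1 ≤ t.2.1 ∧ t.2.1 ≤ k + l))} ≃
      Fin 2 × Fin l :=
    { toFun := fun t => (⟨if t.1.2.1 = k + l + 2 then 0 else 1, by split_ifs <;> omega⟩,
        ⟨if t.1.2.1 = k + l + 2 then t.1.2.2 - (k + 1) else t.1.2.1 - (k + 1), by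
          obtain ⟨-, -, hor⟩ := t.2
          split_ifs <;> omega⟩)
      invFun := fun p => ⟨(if (p.2 : ℕ) = 0 then k + 2 else k + 1,
          if (p.1 : ℕ) = 0 then ((k + l + 2 : ℕ), k + 1 + (p.2 : ℕ))
            else (k + 1 + (p.2 : ℕ), (k + l + 2 : ℕ))), by
        have h1 := p.1.isLt
        have h2 := p.2.isLt
        dsimp only
        split_ifs <;>
          first
          | exact ⟨⟨by omega, by omega⟩, by omega, Or.inl ⟨by omega, by omega, by omega⟩⟩
          | exact ⟨⟨by omega, by omega⟩, by omega, Or.inr ⟨by omega, by omega, by omega⟩⟩⟩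
      left_inv := by
        rintro ⟨⟨a, b, d⟩, ⟨hab, had⟩, haeq, hor⟩
        dsimp only at hab had haeq hor
        apply Subtype.ext
        dsimp only
        simp only [Prod.mk.injEq, Fin.val_mk]
        rcases hor with ⟨hb, hd1, hd2⟩ | ⟨hd, hb1, hb2⟩ <;>
          (split_ifs at haeq ⊢ <;>
            first
            | contradiction
            | omega
            | (simp only [Prod.mk.injEq]; omega))
      right_inv := by
        rintro ⟨f, i⟩
        have h1 := f.isLt
        have h2 := i.isLt
        simp only [Prod.mk.injEq]
        constructor <;>
          · apply Fin.ext
            simp only [Fin.val_mk, apply_ite Prod.fst, apply_ite Prod.snd]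
            split_ifs <;> first | contradiction | omega
    }
  rw [Nat.card_congr (e1.trans e2)]
  simp [Nat.card_eq_fintype_card]

lemma count3 (C : Ctx k l X) :
    Nat.card {L : X ≃ Fin (Fintype.card X) // (∀ x y : X, x < y → L x < L y) ∧
      (L C.z₂ : ℕ) = (L C.z₁ : ℕ) + (k + 1) ∧ (L C.z₃ : ℕ) = (L C.z₂ : ℕ) + l}
      = 2 * (l - 1) := by
  have hk := C.hk; have hl := C.hl
  have e1 : {L : X ≃ Fin (Fintype.card X) // (∀ x y : X, x < y → L x < L y) ∧
      (L C.z₂ : ℕ) = (L C.z₁ : ℕ) + (k + 1) ∧ (L C.z₃ : ℕ) = (L C.z₂ : ℕ) + l} ≃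
      {t : ℕ × ℕ × ℕ // t.1 = k ∧
        ((t.2.1 = k + l + 2 ∧ k + 2 ≤ t.2.2 ∧ t.2.2 ≤ k + l) ∨
         (t.2.2 = k + l + 2 ∧ k + 2 ≤ t.2.1 ∧ t.2.1 ≤ k + l))} := by
    refine Equiv.ofBijective (fun L => ⟨((L.1 C.u : ℕ), (L.1 C.v : ℕ), (L.1 C.w : ℕ)),
      fwd3 C L.1 L.2.1 L.2.2.1 L.2.2.2⟩) ⟨?_, ?_⟩
    · intro L1 L2 h
      simp only [Subtype.mk.injEq, Prod.mk.injEq] at h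
      exact Subtype.ext (unique C L1.1 L2.1 L1.2.1 L2.2.1
        (Fin.ext h.1) (Fin.ext h.2.1) (Fin.ext h.2.2))
    · rintro ⟨⟨a, b, d⟩, ha, hor⟩
      obtain ⟨L, hm, hz1, hz2, hz3, hu, hv, hw⟩ := bwd3 C a b d ha hor
      exact ⟨⟨L, hm, by omega, by omega⟩, Subtype.ext (by simp [hu, hv, hw])⟩
  have e2 : {t : ℕ × ℕ × ℕ // t.1 = k ∧
        ((t.2.1 = k + l + 2 ∧ k + 2 ≤ t.2.2 ∧ t.2.2 ≤ k + l) ∨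
         (t.2.2 = k + l + 2 ∧ k + 2 ≤ t.2.1 ∧ t.2.1 ≤ k + l))} ≃
      Fin 2 × Fin (l - 1) :=
    { toFun := fun t => (⟨if t.1.2.1 = k + l + 2 then 0 else 1, by split_ifs <;> omega⟩,
        ⟨if t.1.2.1 = k + l + 2 then t.1.2.2 - (k + 2) else t.1.2.1 - (k + 2), by
          obtain ⟨-, hor⟩ := t.2
          split_ifs <;> omega⟩)
      invFun := fun p => ⟨(k,
          if (p.1 : ℕ) = 0 then ((k + l + 2 : ℕ), k + 2 + (p.2 : ℕ))
            else (k + 2 + (p.2 : ℕ), (k + l + 2 : ℕ))), by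
        have h1 := p.1.isLt
        have h2 := p.2.isLt
        dsimp only
        split_ifs <;>
          first
          | exact ⟨rfl, Or.inl ⟨by omega, by omega, by omega⟩⟩
          | exact ⟨rfl, Or.inr ⟨by omega, by omega, by omega⟩⟩⟩
      left_inv := by
        rintro ⟨⟨a, b, d⟩, ha, hor⟩
        dsimp only at ha hor
        apply Subtype.ext
        dsimp only
        simp only [Prod.mk.injEq, Fin.val_mk]
        split_ifs <;>
          first
          | contradiction
          | omega
          | (simp only [Prod.mk.injEq]; omega)
      right_inv := by
        rintro ⟨f, i⟩
        have h1 := f.isLt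
        have h2 := i.isLt
        simp only [Prod.mk.injEq]
        constructor <;>
          · apply Fin.ext
            simp only [Fin.val_mk, apply_ite Prod.fst, apply_ite Prod.snd]
            split_ifs <;> first | contradiction | omega
    }
  rw [Nat.card_congr (e1.trans e2)]
  simp [Nat.card_eq_fintype_card]

end CPCaux

theorem CPC2_counterexample (k l : ℕ) (hk : 1 ≤ k) (hl : 2 ≤ l)
    (X : Type) [PartialOrder X] [Fintype X]
    (z₁ z₂ z₃ u v w : X) (c : ℕ → X)
    -- the chain z₁ ≺ x₁ ≺ ⋯ ≺ x_{k−1} ≺ z₂ ≺ y₁ ≺ ⋯ ≺ y_{ℓ−2} ≺ z₃ is c 0, …, c (k+l−1)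
    (hc0 : c 0 = z₁) (hck : c k = z₂) (hctop : c (k + l - 1) = z₃)
    (hchain_inj : ∀ i j : ℕ, i ≤ k + l - 1 → j ≤ k + l - 1 → c i = c j → i = j)
    (hdisj : ∀ i : ℕ, i ≤ k + l - 1 → c i ≠ u ∧ c i ≠ v ∧ c i ≠ w)
    (huv : u ≠ v) (huw : u ≠ w) (hvw : v ≠ w)
    (hsurj : ∀ a : X, a = u ∨ a = v ∨ a = w ∨ ∃ i : ℕ, i ≤ k + l - 1 ∧ a = c i)
    (horder : ∀ a b : X, a < b ↔
      (∃ i j : ℕ, i < j ∧ j ≤ k + l - 1 ∧ a = c i ∧ b = c j) ∨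
      (∃ i : ℕ, i ≤ k - 1 ∧ a = c i ∧ b = u) ∨
      (∃ j : ℕ, k + 1 ≤ j ∧ j ≤ k + l - 1 ∧ a = u ∧ b = c j) ∨
      (∃ i : ℕ, i ≤ k ∧ a = c i ∧ (b = v ∨ b = w))) :
    F X z₁ z₂ z₃ k (l + 2) = (l + 1) * l ∧
    F X z₁ z₂ z₃ (k + 1) l = 2 * (l - 1) ∧
    F X z₁ z₂ z₃ k (l + 1) = 2 * l ∧
    F X z₁ z₂ z₃ (k + 1) (l + 1) = l * (l - 1) ∧
    F X z₁ z₂ z₃ k (l + 1) * F X z₁ z₂ z₃ (k + 1) (l + 1) <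
      F X z₁ z₂ z₃ k (l + 2) * F X z₁ z₂ z₃ (k + 1) l := by
  let C : CPCaux.Ctx k l X := ⟨z₁, z₂, z₃, u, v, w, c, hk, hl, hc0, hck, hctop,
    hchain_inj, hdisj, huv, huw, hvw, hsurj, horder⟩
  have h1 : F X z₁ z₂ z₃ k (l + 2) = (l + 1) * l := CPCaux.count1 C
  have h2 : F X z₁ z₂ z₃ (k + 1) l = 2 * (l - 1) := CPCaux.count3 C
  have h3 : F X z₁ z₂ z₃ k (l + 1) = 2 * l := CPCaux.count2 C
  have h4 : F X z₁ z₂ z₃ (k + 1) (l + 1) = l * (l - 1) := CPCaux.count4 C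
  refine ⟨h1, h2, h3, h4, ?_⟩
  rw [h1, h2, h3, h4]
  obtain ⟨m, rfl⟩ := Nat.exists_eq_add_of_le hl
  have he : 2 + m - 1 = 1 + m := by omega
  rw [he]
  nlinarith [sq_nonneg m, sq_nonneg (m + 1)]
end

section
/- Let P = (X,≺) be a finite poset with n elements and z₁ ≺ z₂ ≺ z₃ distinct. If F(k+2,ℓ) > 0, then F(k+1,ℓ) ≤ nℓ·F(k+2,ℓ). -/
/-- Value-level map: move the entry at position `v` down to position `u`,
shifting positions in `[u, v)` up by one. Identity unless `u ≤ v < n`. -/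
def mdfn (n u v r : ℕ) : ℕ :=
  if u ≤ v ∧ v < n then (if r = v then u else if u ≤ r ∧ r < v then r + 1 else r) else r

/-- Inverse of `mdfn`. -/
def mdgn (n u v r : ℕ) : ℕ :=
  if u ≤ v ∧ v < n then (if r = u then v else if u < r ∧ r ≤ v then r - 1 else r) else r

lemma mdfn_lt {n u v r : ℕ} (hr : r < n) : mdfn n u v r < n := by
  unfold mdfn; split_ifs <;> omega

lemma mdgn_lt {n u v r : ℕ} (hr : r < n) : mdgn n u v r < n := by
  unfold mdgn; split_ifs <;> omega

lemma mdgn_mdfn {n u v r : ℕ} (hr : r < n) : mdgn n u v (mdfn n u v r) = r := by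
  unfold mdfn mdgn; split_ifs <;> omega

lemma mdfn_mdgn {n u v r : ℕ} (hr : r < n) : mdfn n u v (mdgn n u v r) = r := by
  unfold mdfn mdgn; split_ifs <;> omega

/-- The permutation of `Fin n` moving position `v` down to `u`. -/
def mdown (n u v : ℕ) : Equiv.Perm (Fin n) where
  toFun r := ⟨mdfn n u v r.1, mdfn_lt r.2⟩
  invFun r := ⟨mdgn n u v r.1, mdgn_lt r.2⟩
  left_inv r := Fin.ext (mdgn_mdfn r.2)
  right_inv r := Fin.ext (mdfn_mdgn r.2)

@[simp] lemma mdown_val {n u v : ℕ} (r : Fin n) : (mdown n u v r : ℕ) = mdfn n u v r.1 := rfl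

@[simp] lemma mdown_symm_val {n u v : ℕ} (r : Fin n) :
    ((mdown n u v).symm r : ℕ) = mdgn n u v r.1 := rfl

section Ext
variable {X : Type} [PartialOrder X] {n : ℕ}

lemma isext_mdown (L : X ≃ Fin n) (hL : ∀ x y : X, x < y → L x < L y) {u v : ℕ}
    (hu : u ≤ v) (hv : v < n)
    (hb : ∀ x : X, u ≤ (L x : ℕ) → (L x : ℕ) < v → ¬(x < L.symm ⟨v, hv⟩)) :
    ∀ x y : X, x < y → (L.trans (mdown n u v)) x < (L.trans (mdown n u v)) y := by
  intro x y hxy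
  have h := hL x y hxy
  rw [Fin.lt_def] at h ⊢
  simp only [Equiv.trans_apply, mdown_val]
  by_cases hy : (L y : ℕ) = v
  · have hxu : (L x : ℕ) < u := by
      by_contra hc
      push_neg at hc
      refine hb x hc (by omega) ?_
      have hyv : L y = ⟨v, hv⟩ := Fin.ext hy
      rw [← hyv, Equiv.symm_apply_apply]; exact hxy
    unfold mdfn; split_ifs <;> omega
  · unfold mdfn; split_ifs <;> omega

lemma isext_mdown_symm (L : X ≃ Fin n) (hL : ∀ x y : X, x < y → L x < L y) {u v : ℕ}
    (hu : u ≤ v) (hv : v < n)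
    (hb : ∀ x : X, u < (L x : ℕ) → (L x : ℕ) ≤ v → ¬(L.symm ⟨u, lt_of_le_of_lt hu hv⟩ < x)) :
    ∀ x y : X, x < y → (L.trans (mdown n u v).symm) x < (L.trans (mdown n u v).symm) y := by
  intro x y hxy
  have h := hL x y hxy
  rw [Fin.lt_def] at h ⊢
  simp only [Equiv.trans_apply, mdown_symm_val]
  by_cases hx : (L x : ℕ) = u
  · have hyv : v < (L y : ℕ) := by
      by_contra hc
      push_neg at hc
      refine hb y (by omega) hc ?_
      have hxu : L x = ⟨u, lt_of_le_of_lt hu hv⟩ := Fin.ext hx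
      rw [← hxu, Equiv.symm_apply_apply]; exact hxy
    unfold mdgn; split_ifs <;> omega
  · unfold mdgn; split_ifs <;> omega

end Ext

section Chains
variable {X : Type} [PartialOrder X] {n : ℕ}

/-- If every element strictly below level `a` has a blocker above it (within `(·, a]`),
then all elements below level `a` are `< z` where `L z = a`. -/
lemma chain_down (L : X ≃ Fin n) (z : X) (a : ℕ) (ha : (L z : ℕ) = a)
    (hno : ∀ y : X, (L y : ℕ) < a →
      ∃ x : X, (L y : ℕ) < (L x : ℕ) ∧ (L x : ℕ) ≤ a ∧ y < x) :
    ∀ y : X, (L y : ℕ) < a → y < z := by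
  suffices h : ∀ d (y : X), (L y : ℕ) < a → a - (L y : ℕ) ≤ d + 1 → y < z by
    exact fun y hy => h a y hy (by omega)
  intro d
  induction d with
  | zero =>
    intro y hy hd
    obtain ⟨x, h1, h2, h3⟩ := hno y hy
    have hx : (L x : ℕ) = a := by omega
    have hxz : x = z := L.injective (Fin.ext (by rw [hx, ha]))
    exact hxz ▸ h3
  | succ d ih =>
    intro y hy hd
    obtain ⟨x, h1, h2, h3⟩ := hno y hy
    by_cases hxa : (L x : ℕ) = a
    · have hxz : x = z := L.injective (Fin.ext (by rw [hxa, ha]))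
      exact hxz ▸ h3
    · exact lt_trans h3 (ih x (by omega) (by omega))

lemma chain_up (L : X ≃ Fin n) (z : X) (b : ℕ) (hb : (L z : ℕ) = b)
    (hno : ∀ y : X, b < (L y : ℕ) →
      (∃ x : X, b ≤ (L x : ℕ) ∧ (L x : ℕ) < (L y : ℕ) ∧ x < y) ∨ z ≤ y) :
    ∀ y : X, b ≤ (L y : ℕ) → z ≤ y := by
  suffices h : ∀ d (y : X), b ≤ (L y : ℕ) → (L y : ℕ) ≤ b + d → z ≤ y by
    exact fun y hy => h (L y : ℕ) y hy (by omega)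
  intro d
  induction d with
  | zero =>
    intro y hy hd
    have : y = z := L.injective (Fin.ext (by omega))
    exact le_of_eq (this ▸ rfl)
  | succ d ih =>
    intro y hy hd
    rcases eq_or_lt_of_le hy with h | h
    · have : y = z := L.injective (Fin.ext (by omega))
      exact le_of_eq (this ▸ rfl)
    · rcases hno y h with ⟨x, h1, h2, h3⟩ | h'
      · exact le_trans (ih x h1 (by omega)) (le_of_lt h3)
      · exact h'

/-- An extension places `z` above all elements of a set below it. -/
lemma card_le_pos (M : X ≃ Fin n) (hM : ∀ x y : X, x < y → M x < M y) (z : X)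
    (s : Finset X) (hs : ∀ x ∈ s, x < z) : s.card ≤ (M z : ℕ) := by
  have hsub : s.image M ⊆ Finset.Iio (M z) := by
    intro r hr
    obtain ⟨x, hx, rfl⟩ := Finset.mem_image.mp hr
    exact Finset.mem_Iio.mpr (hM x z (hs x hx))
  calc s.card = (s.image M).card := (Finset.card_image_of_injective s M.injective).symm
    _ ≤ (Finset.Iio (M z)).card := Finset.card_le_card hsub
    _ = (M z : ℕ) := Fin.card_Iio _

lemma pos_add_card_lt (M : X ≃ Fin n) (hM : ∀ x y : X, x < y → M x < M y) (z : X)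
    (s : Finset X) (hs : ∀ x ∈ s, z < x) : (M z : ℕ) + s.card < n := by
  have hsub : s.image M ⊆ Finset.Ioi (M z) := by
    intro r hr
    obtain ⟨x, hx, rfl⟩ := Finset.mem_image.mp hr
    exact Finset.mem_Ioi.mpr (hM z x (hs x hx))
  have h1 : s.card ≤ n - 1 - (M z : ℕ) := by
    calc s.card = (s.image M).card := (Finset.card_image_of_injective s M.injective).symm
      _ ≤ (Finset.Ioi (M z)).card := Finset.card_le_card hsub
      _ = n - 1 - (M z : ℕ) := Fin.card_Ioi _
  have := (M z).isLt
  omega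

end Chains

/-- Decoding map: reconstructs the original extension from the modified one plus data. -/
def decode {X : Type} (n : ℕ) (z₁ z₂ z₃ : X) (M : X ≃ Fin n) (p j : ℕ) : X ≃ Fin n :=
  if j = 0 then
    if p ≤ (M z₁ : ℕ) then M.trans (mdown n p ((M z₁ : ℕ) + 1))
    else M.trans (mdown n ((M z₂ : ℕ) - 1) p).symm
  else
    (M.trans (mdown n ((M z₃ : ℕ) - 1) p).symm).trans
      (mdown n ((M z₂ : ℕ) - 1) ((M z₂ : ℕ) - 1 + j)).symm

set_option maxHeartbeats 1000000 in
lemma key {X : Type} [PartialOrder X] {n : ℕ} (z₁ z₂ z₃ : X) (h12 : z₁ < z₂) (h23 : z₂ < z₃)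
    (k l : ℕ) (hl : 1 ≤ l) (L M₀ : X ≃ Fin n)
    (hLe : ∀ x y : X, x < y → L x < L y)
    (hL2 : (L z₂ : ℕ) = (L z₁ : ℕ) + (k + 1)) (hL3 : (L z₃ : ℕ) = (L z₂ : ℕ) + l)
    (hMe : ∀ x y : X, x < y → M₀ x < M₀ y)
    (hM2 : (M₀ z₂ : ℕ) = (M₀ z₁ : ℕ) + (k + 2)) (hM3 : (M₀ z₃ : ℕ) = (M₀ z₂ : ℕ) + l) :
    ∃ M : X ≃ Fin n, (∀ x y : X, x < y → M x < M y) ∧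
      (M z₂ : ℕ) = (M z₁ : ℕ) + (k + 2) ∧ (M z₃ : ℕ) = (M z₂ : ℕ) + l ∧
      ∃ p j : ℕ, p < n ∧ j < l ∧ decode n z₁ z₂ z₃ M p j = L := by
  have h1n : (L z₁ : ℕ) < n := (L z₁).isLt
  have h2n : (L z₂ : ℕ) < n := (L z₂).isLt
  have h3n : (L z₃ : ℕ) < n := (L z₃).isLt
  -- Type 1 move: some w below z₁ can slide up to z₁'s position
  by_cases hT1 : ∃ w : X, (L w : ℕ) < (L z₁ : ℕ) ∧
      ∀ y : X, (L w : ℕ) < (L y : ℕ) → (L y : ℕ) ≤ (L z₁ : ℕ) → ¬(w < y)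
  · obtain ⟨w, hwa, hwblk⟩ := hT1
    set σ := mdown n (L w : ℕ) (L z₁ : ℕ) with hσ
    set M := L.trans σ.symm with hM
    have hMe' : ∀ x y : X, x < y → M x < M y := by
      refine isext_mdown_symm L hLe (le_of_lt hwa) h1n ?_
      intro x hx1 hx2
      have hsw : L.symm ⟨(L w : ℕ), lt_of_le_of_lt (le_of_lt hwa) h1n⟩ = w :=
        Equiv.symm_apply_apply L w
      rw [hsw]
      exact hwblk x hx1 hx2
    have e1 : (M z₁ : ℕ) = (L z₁ : ℕ) - 1 := by
      show mdgn n (L w : ℕ) (L z₁ : ℕ) (L z₁ : ℕ) = (L z₁ : ℕ) - 1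
      unfold mdgn; split_ifs <;> omega
    have e2 : (M z₂ : ℕ) = (L z₂ : ℕ) := by
      show mdgn n (L w : ℕ) (L z₁ : ℕ) (L z₂ : ℕ) = (L z₂ : ℕ)
      unfold mdgn; split_ifs <;> omega
    have e3 : (M z₃ : ℕ) = (L z₃ : ℕ) := by
      show mdgn n (L w : ℕ) (L z₁ : ℕ) (L z₃ : ℕ) = (L z₃ : ℕ)
      unfold mdgn; split_ifs <;> omega
    refine ⟨M, hMe', by omega, by omega, (L w : ℕ), 0, (L w).isLt, hl, ?_⟩
    unfold decode
    rw [if_pos rfl, if_pos (by omega : (L w : ℕ) ≤ (M z₁ : ℕ))]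
    rw [show (M z₁ : ℕ) + 1 = (L z₁ : ℕ) by omega]
    refine Equiv.ext fun x => ?_
    show σ (σ.symm (L x)) = L x
    exact Equiv.apply_symm_apply σ (L x)
  -- no type 1: every element below z₁ is < z₁, hence M₀ z₁ ≥ L z₁
  push_neg at hT1
  have claim1 : ∀ y : X, (L y : ℕ) < (L z₁ : ℕ) → y < z₁ :=
    chain_down L z₁ (L z₁ : ℕ) rfl hT1
  have claimM1 : (L z₁ : ℕ) ≤ (M₀ z₁ : ℕ) := by
    have hcard := card_le_pos M₀ hMe z₁ ((Finset.Iio (L z₁)).map L.symm.toEmbedding) ?_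
    · rwa [Finset.card_map, Fin.card_Iio] at hcard
    · intro x hx
      obtain ⟨r, hr, rfl⟩ := Finset.mem_map.mp hx
      refine claim1 _ ?_
      show ((L (L.symm r) : ℕ)) < (L z₁ : ℕ)
      rw [Equiv.apply_symm_apply]
      exact Fin.lt_iff_val_lt_val.mp (Finset.mem_Iio.mp hr)
  -- Type 2 move: some w above z₃ can slide down to just below z₂
  by_cases hT2 : ∃ w : X, (L z₃ : ℕ) < (L w : ℕ) ∧
      ∀ x : X, (L z₂ : ℕ) ≤ (L x : ℕ) → (L x : ℕ) < (L w : ℕ) → ¬(x < w)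
  · obtain ⟨w, hcw, hwblk⟩ := hT2
    set σ := mdown n (L z₂ : ℕ) (L w : ℕ) with hσ
    set M := L.trans σ with hM
    have hMe' : ∀ x y : X, x < y → M x < M y := by
      refine isext_mdown L hLe (by omega) (L w).isLt ?_
      intro x hx1 hx2
      have hsw : L.symm ⟨(L w : ℕ), (L w).isLt⟩ = w := Equiv.symm_apply_apply L w
      rw [hsw]
      exact hwblk x hx1 hx2
    have e1 : (M z₁ : ℕ) = (L z₁ : ℕ) := by
      show mdfn n (L z₂ : ℕ) (L w : ℕ) (L z₁ : ℕ) = (L z₁ : ℕ)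
      unfold mdfn; split_ifs <;> omega
    have e2 : (M z₂ : ℕ) = (L z₂ : ℕ) + 1 := by
      show mdfn n (L z₂ : ℕ) (L w : ℕ) (L z₂ : ℕ) = (L z₂ : ℕ) + 1
      unfold mdfn; split_ifs <;> omega
    have e3 : (M z₃ : ℕ) = (L z₃ : ℕ) + 1 := by
      show mdfn n (L z₂ : ℕ) (L w : ℕ) (L z₃ : ℕ) = (L z₃ : ℕ) + 1
      unfold mdfn; split_ifs <;> omega
    refine ⟨M, hMe', by omega, by omega, (L w : ℕ), 0, (L w).isLt, hl, ?_⟩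
    unfold decode
    rw [if_pos rfl, if_neg (by omega : ¬((L w : ℕ) ≤ (M z₁ : ℕ)))]
    rw [show (M z₂ : ℕ) - 1 = (L z₂ : ℕ) by omega]
    refine Equiv.ext fun x => ?_
    show σ.symm (σ (L x)) = L x
    exact Equiv.symm_apply_apply σ (L x)
  push_neg at hT2
  -- Type 3 first half: some x₀ strictly between z₂ and z₃ can slide down below z₂
  by_cases hQ : ∃ x : X, (L z₂ : ℕ) < (L x : ℕ) ∧ (L x : ℕ) < (L z₃ : ℕ) ∧
      ∀ y : X, (L z₂ : ℕ) ≤ (L y : ℕ) → (L y : ℕ) < (L x : ℕ) → ¬(y < x)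
  swap
  · -- branch B contradiction: everything at or above z₂'s position is ≥ z₂
    exfalso
    push_neg at hQ
    have hup : ∀ y : X, (L z₂ : ℕ) ≤ (L y : ℕ) → z₂ ≤ y := by
      refine chain_up L z₂ (L z₂ : ℕ) rfl ?_
      intro y hy
      rcases lt_trichotomy (L y : ℕ) (L z₃ : ℕ) with h | h | h
      · exact Or.inl (hQ y hy h)
      · have : y = z₃ := L.injective (Fin.ext h)
        exact Or.inr (this ▸ le_of_lt h23)
      · exact Or.inl (hT2 y h)
    have hcard := pos_add_card_lt M₀ hMe z₂ ((Finset.Ioi (L z₂)).map L.symm.toEmbedding) ?_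
    · rw [Finset.card_map, Fin.card_Ioi] at hcard
      omega
    · intro x hx
      obtain ⟨r, hr, rfl⟩ := Finset.mem_map.mp hx
      have hmem := Finset.mem_Ioi.mp hr
      have hLx : (L (L.symm r)) = r := Equiv.apply_symm_apply L r
      show z₂ < L.symm r
      have hle : z₂ ≤ L.symm r := by
        refine hup _ ?_
        show ((L z₂ : ℕ)) ≤ (L (L.symm r) : ℕ)
        rw [hLx]
        exact le_of_lt (Fin.lt_iff_val_lt_val.mp hmem)
      refine lt_of_le_of_ne hle ?_
      intro heq
      have : L z₂ = r := by rw [heq, Equiv.apply_symm_apply]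
      rw [this] at hmem
      exact lt_irrefl r hmem
  obtain ⟨x₀, hbx, hxc, hxblk⟩ := hQ
  -- Type 3 second half: some w above z₃ can slide down to just below z₃
  by_cases hW : ∃ w : X, (L z₃ : ℕ) < (L w : ℕ) ∧
      ∀ y : X, (L z₃ : ℕ) ≤ (L y : ℕ) → (L y : ℕ) < (L w : ℕ) → ¬(y < w)
  swap
  · -- branch A contradiction: everything at or above z₃'s position is ≥ z₃
    exfalso
    push_neg at hW
    have hup : ∀ y : X, (L z₃ : ℕ) ≤ (L y : ℕ) → z₃ ≤ y := by
      refine chain_up L z₃ (L z₃ : ℕ) rfl ?_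
      intro y hy
      exact Or.inl (hW y hy)
    have hcard := pos_add_card_lt M₀ hMe z₃ ((Finset.Ioi (L z₃)).map L.symm.toEmbedding) ?_
    · rw [Finset.card_map, Fin.card_Ioi] at hcard
      omega
    · intro x hx
      obtain ⟨r, hr, rfl⟩ := Finset.mem_map.mp hx
      have hmem := Finset.mem_Ioi.mp hr
      have hLx : (L (L.symm r)) = r := Equiv.apply_symm_apply L r
      show z₃ < L.symm r
      have hle : z₃ ≤ L.symm r := by
        refine hup _ ?_
        show ((L z₃ : ℕ)) ≤ (L (L.symm r) : ℕ)
        rw [hLx]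
        exact le_of_lt (Fin.lt_iff_val_lt_val.mp hmem)
      refine lt_of_le_of_ne hle ?_
      intro heq
      have : L z₃ = r := by rw [heq, Equiv.apply_symm_apply]
      rw [this] at hmem
      exact lt_irrefl r hmem
  obtain ⟨w, hcw, hwblk⟩ := hW
  -- Type 3 move
  have hpn : (L w : ℕ) < n := (L w).isLt
  have hqn : (L x₀ : ℕ) < n := (L x₀).isLt
  set σ₁ := mdown n (L z₂ : ℕ) (L x₀ : ℕ) with hσ₁
  set L'' := L.trans σ₁ with hL''
  set σ₂ := mdown n (L z₃ : ℕ) (L w : ℕ) with hσ₂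
  set M := L''.trans σ₂ with hM
  have hval'' : ∀ y : X, (L'' y : ℕ) = mdfn n (L z₂ : ℕ) (L x₀ : ℕ) (L y : ℕ) := fun _ => rfl
  have hLe'' : ∀ x y : X, x < y → L'' x < L'' y := by
    refine isext_mdown L hLe (le_of_lt hbx) hqn ?_
    intro y hy1 hy2
    have hsx : L.symm ⟨(L x₀ : ℕ), hqn⟩ = x₀ := Equiv.symm_apply_apply L x₀
    rw [hsx]
    exact hxblk y hy1 hy2
  have hfix : ∀ r : ℕ, (L z₃ : ℕ) ≤ mdfn n (L z₂ : ℕ) (L x₀ : ℕ) r →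
      mdfn n (L z₂ : ℕ) (L x₀ : ℕ) r = r := by
    intro r hr
    unfold mdfn at hr ⊢
    split_ifs at hr ⊢ <;> omega
  have hMe' : ∀ x y : X, x < y → M x < M y := by
    refine isext_mdown L'' hLe'' (by omega) hpn ?_
    intro y hy1 hy2
    rw [hval''] at hy1 hy2
    have hfy := hfix _ hy1
    rw [hfy] at hy1 hy2
    have hw'' : (L'' w) = ⟨(L w : ℕ), hpn⟩ := by
      apply Fin.ext
      show mdfn n (L z₂ : ℕ) (L x₀ : ℕ) (L w : ℕ) = (L w : ℕ)
      unfold mdfn; split_ifs <;> omega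
    have hsw : L''.symm ⟨(L w : ℕ), hpn⟩ = w := by
      rw [← hw'', Equiv.symm_apply_apply]
    rw [hsw]
    exact hwblk y hy1 hy2
  have e1 : (M z₁ : ℕ) = (L z₁ : ℕ) := by
    show mdfn n (L z₃ : ℕ) (L w : ℕ) (mdfn n (L z₂ : ℕ) (L x₀ : ℕ) (L z₁ : ℕ)) = (L z₁ : ℕ)
    unfold mdfn; split_ifs <;> omega
  have e2 : (M z₂ : ℕ) = (L z₂ : ℕ) + 1 := by
    show mdfn n (L z₃ : ℕ) (L w : ℕ) (mdfn n (L z₂ : ℕ) (L x₀ : ℕ) (L z₂ : ℕ)) = (L z₂ : ℕ) + 1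
    unfold mdfn; split_ifs <;> omega
  have e3 : (M z₃ : ℕ) = (L z₃ : ℕ) + 1 := by
    show mdfn n (L z₃ : ℕ) (L w : ℕ) (mdfn n (L z₂ : ℕ) (L x₀ : ℕ) (L z₃ : ℕ)) = (L z₃ : ℕ) + 1
    unfold mdfn; split_ifs <;> omega
  refine ⟨M, hMe', by omega, by omega, (L w : ℕ), (L x₀ : ℕ) - (L z₂ : ℕ), hpn, by omega, ?_⟩
  unfold decode
  rw [if_neg (by omega : ¬((L x₀ : ℕ) - (L z₂ : ℕ) = 0))]
  rw [show (M z₃ : ℕ) - 1 = (L z₃ : ℕ) by omega]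
  rw [show (M z₂ : ℕ) - 1 = (L z₂ : ℕ) by omega]
  rw [show (L z₂ : ℕ) + ((L x₀ : ℕ) - (L z₂ : ℕ)) = (L x₀ : ℕ) by omega]
  refine Equiv.ext fun x => ?_
  show σ₁.symm (σ₂.symm (σ₂ (σ₁ (L x)))) = L x
  rw [Equiv.symm_apply_apply, Equiv.symm_apply_apply]

theorem ratio_bound_down_k (X : Type) [PartialOrder X] [Fintype X]
    (n : ℕ) (hn : Fintype.card X = n)
    (z₁ z₂ z₃ : X) (h12 : z₁ < z₂) (h23 : z₂ < z₃)
    (k l : ℕ) (hk : 1 ≤ k) (hl : 1 ≤ l)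
    (hpos : 0 < F X z₁ z₂ z₃ (k + 2) l) :
    F X z₁ z₂ z₃ (k + 1) l ≤ n * l * F X z₁ z₂ z₃ (k + 2) l := by
  subst hn
  set N := Fintype.card X with hN
  unfold F at hpos ⊢
  obtain ⟨⟨⟨M₀, hM₀e, hM₀2, hM₀3⟩⟩, -⟩ := Nat.card_pos_iff.mp hpos
  have hex : ∀ s : {L : X ≃ Fin N // (∀ a b : X, a < b → L a < L b) ∧
      (L z₂ : ℕ) = (L z₁ : ℕ) + (k + 1) ∧ (L z₃ : ℕ) = (L z₂ : ℕ) + (l)},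
      ∃ t : {L : X ≃ Fin N // (∀ a b : X, a < b → L a < L b) ∧
        (L z₂ : ℕ) = (L z₁ : ℕ) + (k + 2) ∧ (L z₃ : ℕ) = (L z₂ : ℕ) + (l)} × Fin N × Fin l,
      decode N z₁ z₂ z₃ t.1.val t.2.1.val t.2.2.val = s.val := by
    rintro ⟨L, hLe, hL2, hL3⟩
    obtain ⟨M, hMe, hM2, hM3, p, j, hp, hj, hdec⟩ :=
      key z₁ z₂ z₃ h12 h23 k l hl L M₀ hLe hL2 hL3 hM₀e hM₀2 hM₀3
    exact ⟨⟨⟨M, hMe, hM2, hM3⟩, ⟨p, hp⟩, ⟨j, hj⟩⟩, hdec⟩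
  choose f hf using hex
  have hinj : Function.Injective f := by
    intro s1 s2 h
    apply Subtype.ext
    rw [← hf s1, ← hf s2, h]
  calc Nat.card {L : X ≃ Fin N // (∀ a b : X, a < b → L a < L b) ∧
        (L z₂ : ℕ) = (L z₁ : ℕ) + (k + 1) ∧ (L z₃ : ℕ) = (L z₂ : ℕ) + l}
      ≤ Nat.card ({L : X ≃ Fin N // (∀ a b : X, a < b → L a < L b) ∧
        (L z₂ : ℕ) = (L z₁ : ℕ) + (k + 2) ∧ (L z₃ : ℕ) = (L z₂ : ℕ) + l} × Fin N × Fin l) :=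
        Nat.card_le_card_of_injective f hinj
    _ = Nat.card {L : X ≃ Fin N // (∀ a b : X, a < b → L a < L b) ∧
        (L z₂ : ℕ) = (L z₁ : ℕ) + (k + 2) ∧ (L z₃ : ℕ) = (L z₂ : ℕ) + l} * (N * l) := by
        simp [Nat.card_prod, Nat.card_eq_fintype_card]
    _ = N * l * Nat.card {L : X ≃ Fin N // (∀ a b : X, a < b → L a < L b) ∧
        (L z₂ : ℕ) = (L z₁ : ℕ) + (k + 2) ∧ (L z₃ : ℕ) = (L z₂ : ℕ) + l} := by ring
end

section
/- Let P = (X,≺) be a finite poset with n elements and z₁ ≺ z₂ ≺ z₃ distinct, and suppose F(k,ℓ)·F(k+2,ℓ) > 0 for some k,ℓ ≥ 1. Then F(k+1,ℓ)² ≤ 2nℓ²k · F(k,ℓ)·F(k+2,ℓ). -/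
open scoped Classical
set_option linter.unusedSectionVars false
set_option maxHeartbeats 1000000
set_option linter.unusedVariables false

section Slide
variable {n : ℕ}

def slideFun (a b j : Fin n) : Fin n :=
  if (j : ℕ) = a then b
  else if h : (a : ℕ) < j ∧ (j : ℕ) ≤ b then ⟨j - 1, by omega⟩
  else if h2 : (b : ℕ) ≤ j ∧ (j : ℕ) < a then ⟨j + 1, by have := a.isLt; omega⟩
  else j

lemma slideFun_val (a b j : Fin n) : (slideFun a b j : ℕ) =
    if (j : ℕ) = a then (b : ℕ)
    else if (a : ℕ) < j ∧ (j : ℕ) ≤ b then j - 1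
    else if (b : ℕ) ≤ j ∧ (j : ℕ) < a then j + 1
    else j := by
  unfold slideFun
  split_ifs <;> rfl

lemma slideFun_inv (a b j : Fin n) : slideFun b a (slideFun a b j) = j := by
  have ha := a.isLt; have hb := b.isLt; have hj := j.isLt
  apply Fin.ext
  rw [slideFun_val, slideFun_val]
  split_ifs <;> omega

def slide (a b : Fin n) : Equiv.Perm (Fin n) :=
  ⟨slideFun a b, slideFun b a, slideFun_inv a b, slideFun_inv b a⟩

lemma slide_val (a b j : Fin n) : ((slide a b) j : ℕ) =
    if (j : ℕ) = a then (b : ℕ)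
    else if (a : ℕ) < j ∧ (j : ℕ) ≤ b then j - 1
    else if (b : ℕ) ≤ j ∧ (j : ℕ) < a then j + 1
    else j := slideFun_val a b j

lemma slide_symm (a b : Fin n) : (slide a b).symm = slide b a := rfl

lemma slide_cancel {α : Sort*} (L : α ≃ Fin n) (a b : Fin n) :
    (L.trans (slide a b)).trans (slide b a) = L := by
  rw [← slide_symm, Equiv.trans_assoc, Equiv.symm_trans_self, Equiv.trans_refl]

end Slide

section Main

variable {X : Type} [PartialOrder X] [Fintype X]

def fmk (z : X) (m : ℕ) : Fin (Fintype.card X) :=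
  ⟨min m (Fintype.card X - 1), by
    have : 0 < Fintype.card X := Fintype.card_pos_iff.mpr ⟨z⟩
    omega⟩

lemma fmk_val (z : X) {m : ℕ} (h : m < Fintype.card X) : (fmk z m : ℕ) = m := by
  simp only [fmk]
  omega

lemma ext_slide {L : X ≃ Fin (Fintype.card X)} (hL : ∀ a b : X, a < b → L a < L b)
    (a b : Fin (Fintype.card X))
    (h1 : ∀ u : X, (a : ℕ) < L u → (L u : ℕ) ≤ b → ¬ L.symm a < u)
    (h2 : ∀ u : X, (b : ℕ) ≤ L u → (L u : ℕ) < a → ¬ u < L.symm a) :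
    ∀ p q : X, p < q → (L.trans (slide a b)) p < (L.trans (slide a b)) q := by
  intro p q hpq
  have hPQ : (L p : ℕ) < L q := hL p q hpq
  have ha := a.isLt
  simp only [Equiv.trans_apply]
  rw [Fin.lt_def, slide_val, slide_val]
  by_cases hp : (L p : ℕ) = a
  · have hpa : p = L.symm a := by
      rw [← Equiv.symm_apply_apply L p, Fin.ext hp]
    have hq1 : ¬((a : ℕ) < L q ∧ (L q : ℕ) ≤ b) := fun hh => h1 q hh.1 hh.2 (hpa ▸ hpq)
    have hqa : (L q : ℕ) ≠ a := by omega
    split_ifs <;> omega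
  · by_cases hq : (L q : ℕ) = a
    · have hqa : q = L.symm a := by
        rw [← Equiv.symm_apply_apply L q, Fin.ext hq]
      have hp2 : ¬((b : ℕ) ≤ L p ∧ (L p : ℕ) < a) := fun hh => h2 p hh.1 hh.2 (hqa ▸ hpq)
      split_ifs <;> omega
    · split_ifs <;> omega

lemma pos_slide (L : X ≃ Fin (Fintype.card X)) (a b : Fin (Fintype.card X)) (u : X) :
    ((L.trans (slide a b)) u : ℕ) =
    if (L u : ℕ) = a then (b : ℕ)
    else if (a : ℕ) < L u ∧ (L u : ℕ) ≤ b then (L u : ℕ) - 1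
    else if (b : ℕ) ≤ L u ∧ (L u : ℕ) < a then (L u : ℕ) + 1
    else (L u : ℕ) := slide_val a b (L u)

end Main

section Key
variable {X : Type} [PartialOrder X] [Fintype X]

noncomputable def psiA (z₁ z₂ z₃ : X) {k l : ℕ} (L' : X ≃ Fin (Fintype.card X))
    (b : Fin 2) (i : Fin k) (t : Fin l) : X ≃ Fin (Fintype.card X) :=
  if b = 0 then
    if (t : ℕ) = 0 then
      L'.trans (slide (fmk z₁ ((L' z₁ : ℕ) - 1)) (fmk z₁ ((L' z₁ : ℕ) + (i : ℕ))))
    else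
      (L'.trans (slide (fmk z₁ ((L' z₁ : ℕ) - 1)) (fmk z₁ ((L' z₂ : ℕ) + (t : ℕ))))).trans
        (slide (fmk z₁ (L' z₂ : ℕ)) (fmk z₁ ((L' z₁ : ℕ) + (i : ℕ))))
  else
    if (t : ℕ) = 0 then
      L'.trans (slide (fmk z₁ ((L' z₃ : ℕ) + 1)) (fmk z₁ ((L' z₁ : ℕ) + (i : ℕ) + 1)))
    else
      (L'.trans (slide (fmk z₁ ((L' z₃ : ℕ) + 1)) (fmk z₁ ((L' z₂ : ℕ) + 1 + (t : ℕ))))).trans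
        (slide (fmk z₁ ((L' z₂ : ℕ) + 1)) (fmk z₁ ((L' z₁ : ℕ) + (i : ℕ) + 1)))

noncomputable def psiB (z₁ z₂ z₃ : X) {l : ℕ} (L' : X ≃ Fin (Fintype.card X))
    (q : Fin (Fintype.card X)) (t : Fin l) : X ≃ Fin (Fintype.card X) :=
  if (t : ℕ) = 0 then
    if (q : ℕ) ≤ (L' z₁ : ℕ) then L'.trans (slide (fmk z₁ ((L' z₁ : ℕ) + 1)) q)
    else L'.trans (slide (fmk z₁ ((L' z₂ : ℕ) - 1)) q)
  else
    (L'.trans (slide (fmk z₁ ((L' z₃ : ℕ) - 1)) q)).trans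
      (slide (fmk z₁ ((L' z₂ : ℕ) - 1)) (fmk z₁ ((L' z₂ : ℕ) - 1 + (t : ℕ))))

lemma keyA (z₁ z₂ z₃ : X) (h12 : z₁ < z₂) (h23 : z₂ < z₃) {k l : ℕ} (hk : 1 ≤ k) (hl : 1 ≤ l)
    {M L : X ≃ Fin (Fintype.card X)}
    (hMe : ∀ a b : X, a < b → M a < M b) (hM2 : (M z₂ : ℕ) = (M z₁ : ℕ) + k)
    (hM3 : (M z₃ : ℕ) = (M z₂ : ℕ) + l)
    (hLe : ∀ a b : X, a < b → L a < L b) (hL2 : (L z₂ : ℕ) = (L z₁ : ℕ) + (k+1))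
    (hL3 : (L z₃ : ℕ) = (L z₂ : ℕ) + l) :
    ∃ (L' : X ≃ Fin (Fintype.card X)) (b : Fin 2) (i : Fin k) (t : Fin l),
      ((∀ a b : X, a < b → L' a < L' b) ∧ (L' z₂ : ℕ) = (L' z₁ : ℕ) + k ∧
        (L' z₃ : ℕ) = (L' z₂ : ℕ) + l) ∧ psiA z₁ z₂ z₃ L' b i t = L := by
  have hNpos : 0 < Fintype.card X := Fintype.card_pos_iff.mpr ⟨z₁⟩
  have h3N : (L z₃ : ℕ) < Fintype.card X := (L z₃).isLt
  set xx : ℕ → X := fun m => L.symm (fmk z₁ m) with hxxdef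
  have hxxL : ∀ m : ℕ, m < Fintype.card X → (L (xx m) : ℕ) = m := by
    intro m hm
    show ((L (L.symm (fmk z₁ m))) : ℕ) = m
    rw [Equiv.apply_symm_apply]; exact fmk_val z₁ hm
  have hident : ∀ (u : X) (m : ℕ), m < Fintype.card X → (L u : ℕ) = m → u = xx m := by
    intro u m hm h
    have h2 : L u = fmk z₁ m := Fin.ext (by rw [h, fmk_val z₁ hm])
    show u = L.symm (fmk z₁ m)
    rw [← Equiv.symm_apply_apply L u, h2]
  have hidz : ∀ (u v : X), (L u : ℕ) = (L v : ℕ) → u = v := fun u v h => L.injective (Fin.ext h)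
  by_cases hA1 : ∃ i, 1 ≤ i ∧ i ≤ k ∧ ¬ z₁ < xx ((L z₁ : ℕ) + i)
  · -- Case A1 : some x_i not above z₁, move the least such just before z₁
    set i := Nat.find hA1 with hidef
    obtain ⟨hi1, hik, hiz⟩ := Nat.find_spec hA1
    have hminA : ∀ j, 1 ≤ j → j < i → z₁ < xx ((L z₁ : ℕ) + j) := by
      intro j h1 hj
      by_contra hc
      exact Nat.find_min hA1 hj ⟨h1, by omega, hc⟩
    have hbd : (L z₁ : ℕ) + i < Fintype.card X := by omega
    set a := fmk z₁ ((L z₁ : ℕ) + i) with hadef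
    set bb := fmk z₁ (L z₁ : ℕ) with hbdef
    have hav : (a : ℕ) = (L z₁ : ℕ) + i := fmk_val z₁ hbd
    have hbv : (bb : ℕ) = (L z₁ : ℕ) := fmk_val z₁ (by omega)
    have hsymm : L.symm a = xx ((L z₁ : ℕ) + i) := rfl
    have hExt' : ∀ p q : X, p < q → (L.trans (slide a bb)) p < (L.trans (slide a bb)) q := by
      apply ext_slide hLe
      · intro u hu1 hu2
        exfalso; rw [hav] at hu1; rw [hbv] at hu2; omega
      · intro u hu1 hu2
        rw [hbv] at hu1; rw [hav] at hu2
        rw [hsymm]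
        rcases Nat.eq_or_lt_of_le hu1 with heq | hlt
        · have : u = z₁ := hidz u z₁ heq.symm
          rw [this]; exact hiz
        · have hj : u = xx ((L z₁ : ℕ) + ((L u : ℕ) - (L z₁ : ℕ))) :=
            hident u _ (by omega) (by omega)
          intro hc
          have hzj : z₁ < xx ((L z₁ : ℕ) + ((L u : ℕ) - (L z₁ : ℕ))) :=
            hminA _ (by omega) (by omega)
          exact hiz (lt_trans (hj ▸ hzj) hc)
    have e1 : ((L.trans (slide a bb)) z₁ : ℕ) = (L z₁ : ℕ) + 1 := by
      rw [pos_slide, hav, hbv]; split_ifs <;> omega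
    have e2 : ((L.trans (slide a bb)) z₂ : ℕ) = (L z₂ : ℕ) := by
      rw [pos_slide, hav, hbv]; split_ifs <;> omega
    have e3 : ((L.trans (slide a bb)) z₃ : ℕ) = (L z₃ : ℕ) := by
      rw [pos_slide, hav, hbv]; split_ifs <;> omega
    have hiclt : i - 1 < k := by omega
    set ic : Fin k := ⟨i - 1, hiclt⟩ with hicdef
    refine ⟨L.trans (slide a bb), 0, ic, ⟨0, by omega⟩,
      ⟨hExt', by omega, by omega⟩, ?_⟩
    rw [psiA]
    rw [if_pos rfl, if_pos rfl]
    have c1 : fmk z₁ (((L.trans (slide a bb)) z₁ : ℕ) - 1) = bb := by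
      have harg : ((L.trans (slide a bb)) z₁ : ℕ) - 1 = (L z₁ : ℕ) := by omega
      rw [harg, hbdef]
    have c2 : fmk z₁ (((L.trans (slide a bb)) z₁ : ℕ) + (ic : ℕ)) = a := by
      have hv : (ic : ℕ) = i - 1 := rfl
      have harg : ((L.trans (slide a bb)) z₁ : ℕ) + (ic : ℕ) = (L z₁ : ℕ) + i := by omega
      rw [harg, hadef]
    rw [c1, c2]
    exact slide_cancel L a bb
  · -- Case A2 : every x_i is above z₁
    push_neg at hA1
    have hpigeon : ∀ (s t : Finset (Fin (Fintype.card X))),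
        (∀ m ∈ s, M (L.symm m) ∈ t) → s.card ≤ t.card := by
      intro s t h
      exact Finset.card_le_card_of_injOn _ h ((M.injective.comp L.symm.injective).injOn)
    have histar_ex : ∃ i, 1 ≤ i ∧ i ≤ k ∧ ¬ xx ((L z₁ : ℕ) + i) < z₂ := by
      by_contra hc
      push_neg at hc
      have hmap : ∀ m ∈ Finset.Ioo (L z₁) (L z₂), M (L.symm m) ∈ Finset.Ioo (M z₁) (M z₂) := by
        intro m hm
        rw [Finset.mem_Ioo] at hm ⊢
        have hm1 : (L z₁ : ℕ) < (m : ℕ) := hm.1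
        have hm2 : (m : ℕ) < (L z₂ : ℕ) := hm.2
        have hmN : (m : ℕ) < Fintype.card X := m.isLt
        have hu : L.symm m = xx ((L z₁ : ℕ) + ((m : ℕ) - (L z₁ : ℕ))) := by
          apply hident _ _ (by omega)
          rw [Equiv.apply_symm_apply]
          omega
        constructor
        · exact hMe _ _ (by rw [hu]; exact hA1 _ (by omega) (by omega))
        · exact hMe _ _ (by rw [hu]; exact hc _ (by omega) (by omega))
      have hcard := hpigeon _ _ hmap
      rw [Fin.card_Ioo, Fin.card_Ioo] at hcard
      omega
    set istar := Nat.findGreatest (fun i => 1 ≤ i ∧ i ≤ k ∧ ¬ xx ((L z₁ : ℕ) + i) < z₂) k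
      with histardef
    obtain ⟨i₀, hi₀⟩ := histar_ex
    have histar : 1 ≤ istar ∧ istar ≤ k ∧ ¬ xx ((L z₁ : ℕ) + istar) < z₂ :=
      Nat.findGreatest_spec (P := fun i => 1 ≤ i ∧ i ≤ k ∧ ¬ xx ((L z₁ : ℕ) + i) < z₂)
        hi₀.2.1 hi₀
    obtain ⟨hs1, hsk, hsnot⟩ := histar
    have hsmax : ∀ j, istar < j → j ≤ k → xx ((L z₁ : ℕ) + j) < z₂ := by
      intro j hj hjk
      by_contra hc
      exact Nat.findGreatest_is_greatest
        (P := fun i => 1 ≤ i ∧ i ≤ k ∧ ¬ xx ((L z₁ : ℕ) + i) < z₂) hj hjk ⟨by omega, hjk, hc⟩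
    have hbd1 : (L z₁ : ℕ) + istar < Fintype.card X := by omega
    set a1 := fmk z₁ ((L z₁ : ℕ) + istar) with ha1def
    set b1 := fmk z₁ (L z₂ : ℕ) with hb1def
    have ha1v : (a1 : ℕ) = (L z₁ : ℕ) + istar := fmk_val z₁ hbd1
    have hb1v : (b1 : ℕ) = (L z₂ : ℕ) := fmk_val z₁ (by omega)
    have hsymm1 : L.symm a1 = xx ((L z₁ : ℕ) + istar) := rfl
    have hExt1 : ∀ p q : X, p < q → (L.trans (slide a1 b1)) p < (L.trans (slide a1 b1)) q := by
      apply ext_slide hLe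
      · intro u hu1 hu2
        rw [ha1v] at hu1; rw [hb1v] at hu2
        rw [hsymm1]
        rcases Nat.eq_or_lt_of_le hu2 with heq | hlt
        · have : u = z₂ := hidz u z₂ heq
          rw [this]; exact hsnot
        · have hj : u = xx ((L z₁ : ℕ) + ((L u : ℕ) - (L z₁ : ℕ))) :=
            hident u _ (by omega) (by omega)
          intro hc
          have hxj : xx ((L z₁ : ℕ) + ((L u : ℕ) - (L z₁ : ℕ))) < z₂ := hsmax _ (by omega) (by omega)
          exact hsnot (lt_trans hc (hj ▸ hxj))
      · intro u hu1 hu2; exfalso; rw [hb1v] at hu1; rw [ha1v] at hu2; omega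
    set L1 := L.trans (slide a1 b1) with hL1def
    have hL1rng : ∀ u : X, ((L1 u : ℕ) = (L u : ℕ)) ∨
        ((L z₁ : ℕ) + istar ≤ (L1 u : ℕ) ∧ (L1 u : ℕ) ≤ (L z₂ : ℕ) ∧
          (L z₁ : ℕ) + istar ≤ (L u : ℕ) ∧ (L u : ℕ) ≤ (L z₂ : ℕ)) := by
      intro u
      rw [hL1def, pos_slide, ha1v, hb1v]
      split_ifs <;> omega
    have hz1L1 : (L1 z₁ : ℕ) = (L z₁ : ℕ) := by
      rw [hL1def, pos_slide, ha1v, hb1v]; split_ifs <;> omega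
    have hz2L1 : (L1 z₂ : ℕ) = (L z₂ : ℕ) - 1 := by
      rw [hL1def, pos_slide, ha1v, hb1v]; split_ifs <;> omega
    have hz3L1 : (L1 z₃ : ℕ) = (L z₃ : ℕ) := by
      rw [hL1def, pos_slide, ha1v, hb1v]; split_ifs <;> omega
    by_cases hV : ∃ m, (L z₁ : ℕ) < m ∧ m < (L z₃ : ℕ) ∧ m ≠ (L z₂ : ℕ) ∧ ¬ xx m < z₃
    · -- violators exist
      set vp := Nat.findGreatest
        (fun m => (L z₁ : ℕ) < m ∧ m < (L z₃ : ℕ) ∧ m ≠ (L z₂ : ℕ) ∧ ¬ xx m < z₃) (L z₃ : ℕ)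
        with hvpdef
      obtain ⟨m₀, hm₀⟩ := hV
      have hVs : (L z₁ : ℕ) < vp ∧ vp < (L z₃ : ℕ) ∧ vp ≠ (L z₂ : ℕ) ∧ ¬ xx vp < z₃ :=
        Nat.findGreatest_spec
          (P := fun m => (L z₁ : ℕ) < m ∧ m < (L z₃ : ℕ) ∧ m ≠ (L z₂ : ℕ) ∧ ¬ xx m < z₃)
          (by omega) hm₀
      obtain ⟨hv1, hv3, hv2, hvnot⟩ := hVs
      have hVmax : ∀ m, vp < m → m < (L z₃ : ℕ) → m ≠ (L z₂ : ℕ) → (L z₁ : ℕ) < m →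
          xx m < z₃ := by
        intro m h1 h2 h3 h4
        by_contra hc
        exact Nat.findGreatest_is_greatest
          (P := fun m => (L z₁ : ℕ) < m ∧ m < (L z₃ : ℕ) ∧ m ≠ (L z₂ : ℕ) ∧ ¬ xx m < z₃)
          h1 (by omega) ⟨h4, h2, h3, hc⟩
      have hcondV : ∀ u : X, vp < (L u : ℕ) → (L u : ℕ) ≤ (L z₃ : ℕ) → ¬ xx vp < u := by
        intro u hu1 hu2
        rcases Nat.eq_or_lt_of_le hu2 with heq | hlt
        · have : u = z₃ := hidz u z₃ heq
          rw [this]; exact hvnot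
        · by_cases hm2 : (L u : ℕ) = (L z₂ : ℕ)
          · have : u = z₂ := hidz u z₂ hm2
            rw [this]; intro hc; exact hvnot (lt_trans hc h23)
          · have hj : u = xx (L u : ℕ) := hident u _ (by omega) rfl
            intro hc
            exact hvnot (lt_trans hc (hj ▸ hVmax _ hu1 hlt hm2 (by omega)))
      by_cases hvx : vp < (L z₂ : ℕ)
      · -- A2a-x : the top violator is one of the x's; move it just after z₃
        set a2 := fmk z₁ vp with ha2def
        set b2 := fmk z₁ (L z₃ : ℕ) with hb2def
        have ha2v : (a2 : ℕ) = vp := fmk_val z₁ (by omega)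
        have hb2v : (b2 : ℕ) = (L z₃ : ℕ) := fmk_val z₁ (by omega)
        have hsymm2 : L.symm a2 = xx vp := rfl
        have hExtX : ∀ p q : X, p < q → (L.trans (slide a2 b2)) p < (L.trans (slide a2 b2)) q := by
          apply ext_slide hLe
          · intro u hu1 hu2
            rw [ha2v] at hu1; rw [hb2v] at hu2
            rw [hsymm2]
            exact hcondV u hu1 hu2
          · intro u hu1 hu2; exfalso; rw [hb2v] at hu1; rw [ha2v] at hu2; omega
        have e1 : ((L.trans (slide a2 b2)) z₁ : ℕ) = (L z₁ : ℕ) := by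
          rw [pos_slide, ha2v, hb2v]; split_ifs <;> omega
        have e2 : ((L.trans (slide a2 b2)) z₂ : ℕ) = (L z₂ : ℕ) - 1 := by
          rw [pos_slide, ha2v, hb2v]; split_ifs <;> omega
        have e3 : ((L.trans (slide a2 b2)) z₃ : ℕ) = (L z₃ : ℕ) - 1 := by
          rw [pos_slide, ha2v, hb2v]; split_ifs <;> omega
        have hiclt : vp - (L z₁ : ℕ) - 1 < k := by omega
        set ic : Fin k := ⟨vp - (L z₁ : ℕ) - 1, hiclt⟩ with hicdef
        refine ⟨L.trans (slide a2 b2), 1, ic, ⟨0, by omega⟩,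
          ⟨hExtX, by omega, by omega⟩, ?_⟩
        rw [psiA]
        rw [if_neg (by decide), if_pos rfl]
        have c1 : fmk z₁ (((L.trans (slide a2 b2)) z₃ : ℕ) + 1) = b2 := by
          have harg : ((L.trans (slide a2 b2)) z₃ : ℕ) + 1 = (L z₃ : ℕ) := by omega
          rw [harg, hb2def]
        have c2 : fmk z₁ (((L.trans (slide a2 b2)) z₁ : ℕ) + (ic : ℕ) + 1) = a2 := by
          have hv : (ic : ℕ) = vp - (L z₁ : ℕ) - 1 := rfl
          have harg : ((L.trans (slide a2 b2)) z₁ : ℕ) + (ic : ℕ) + 1 = vp := by omega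
          rw [harg, ha2def]
        rw [c1, c2]
        exact slide_cancel L a2 b2
      · -- A2a-w : top violator is a w; move it past z₃ and x_istar just after z₂
        have hvgt : (L z₂ : ℕ) < vp := by omega
        set a2 := fmk z₁ vp with ha2def
        set b2 := fmk z₁ (L z₃ : ℕ) with hb2def
        have ha2v : (a2 : ℕ) = vp := fmk_val z₁ (by omega)
        have hb2v : (b2 : ℕ) = (L z₃ : ℕ) := fmk_val z₁ (by omega)
        have hxxvp : (L (xx vp) : ℕ) = vp := hxxL vp (by omega)
        have hL1vp : (L1 (xx vp) : ℕ) = vp := by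
          rcases hL1rng (xx vp) with h | h <;> omega
        have hsymm2 : L1.symm a2 = xx vp := by
          have h : a2 = L1 (xx vp) := Fin.ext (by rw [ha2v, hL1vp])
          rw [h, Equiv.symm_apply_apply]
        have hExtW : ∀ p q : X, p < q →
            (L1.trans (slide a2 b2)) p < (L1.trans (slide a2 b2)) q := by
          apply ext_slide hExt1
          · intro u hu1 hu2
            rw [ha2v] at hu1; rw [hb2v] at hu2
            have hLu : (L1 u : ℕ) = (L u : ℕ) := by
              rcases hL1rng u with h | h <;> omega
            rw [hsymm2]
            exact hcondV u (by omega) (by omega)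
          · intro u hu1 hu2; exfalso; rw [hb2v] at hu1; rw [ha2v] at hu2; omega
        have e1 : ((L1.trans (slide a2 b2)) z₁ : ℕ) = (L z₁ : ℕ) := by
          rw [pos_slide, ha2v, hb2v, hz1L1]; split_ifs <;> omega
        have e2 : ((L1.trans (slide a2 b2)) z₂ : ℕ) = (L z₂ : ℕ) - 1 := by
          rw [pos_slide, ha2v, hb2v, hz2L1]; split_ifs <;> omega
        have e3 : ((L1.trans (slide a2 b2)) z₃ : ℕ) = (L z₃ : ℕ) - 1 := by
          rw [pos_slide, ha2v, hb2v, hz3L1]; split_ifs <;> omega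
        have hiclt : istar - 1 < k := by omega
        set ic : Fin k := ⟨istar - 1, hiclt⟩ with hicdef
        have htlt : vp - (L z₂ : ℕ) < l := by omega
        set tc : Fin l := ⟨vp - (L z₂ : ℕ), htlt⟩ with htcdef
        have htcv : (tc : ℕ) = vp - (L z₂ : ℕ) := rfl
        refine ⟨L1.trans (slide a2 b2), 1, ic, tc,
          ⟨hExtW, by omega, by omega⟩, ?_⟩
        rw [psiA]
        rw [if_neg (by decide), if_neg (by rw [htcv]; omega)]
        have c1 : fmk z₁ (((L1.trans (slide a2 b2)) z₃ : ℕ) + 1) = b2 := by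
          have harg : ((L1.trans (slide a2 b2)) z₃ : ℕ) + 1 = (L z₃ : ℕ) := by omega
          rw [harg, hb2def]
        have c2 : fmk z₁ (((L1.trans (slide a2 b2)) z₂ : ℕ) + 1 + (tc : ℕ)) = a2 := by
          have harg : ((L1.trans (slide a2 b2)) z₂ : ℕ) + 1 + (tc : ℕ) = vp := by omega
          rw [harg, ha2def]
        have c3 : fmk z₁ (((L1.trans (slide a2 b2)) z₂ : ℕ) + 1) = b1 := by
          have harg : ((L1.trans (slide a2 b2)) z₂ : ℕ) + 1 = (L z₂ : ℕ) := by omega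
          rw [harg, hb1def]
        have c4 : fmk z₁ (((L1.trans (slide a2 b2)) z₁ : ℕ) + (ic : ℕ) + 1) = a1 := by
          have hicv : (ic : ℕ) = istar - 1 := rfl
          have harg : ((L1.trans (slide a2 b2)) z₁ : ℕ) + (ic : ℕ) + 1 = (L z₁ : ℕ) + istar := by
            omega
          rw [harg, ha1def]
        rw [c1, c2, c3, c4]
        rw [slide_cancel]
        exact slide_cancel L a1 b1
    · -- A2b : no violators
      push_neg at hV
      have hsex : ∃ s, 1 ≤ s ∧ s ≤ l - 1 ∧ ¬ z₁ < xx ((L z₂ : ℕ) + s) := by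
        by_contra hc
        push_neg at hc
        have hmap : ∀ m ∈ Finset.Ioo (L z₁) (L z₃), M (L.symm m) ∈ Finset.Ioo (M z₁) (M z₃) := by
          intro m hm
          rw [Finset.mem_Ioo] at hm ⊢
          have hm1 : (L z₁ : ℕ) < (m : ℕ) := hm.1
          have hm3 : (m : ℕ) < (L z₃ : ℕ) := hm.2
          have hmN : (m : ℕ) < Fintype.card X := m.isLt
          have hu : L.symm m = xx (m : ℕ) :=
            hident _ _ (by omega) (by rw [Equiv.apply_symm_apply])
          have hz2eq : (m : ℕ) = (L z₂ : ℕ) → L.symm m = z₂ := by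
            intro h
            apply hidz _ z₂
            rw [Equiv.apply_symm_apply]; omega
          constructor
          · apply hMe
            by_cases hcase : (m : ℕ) = (L z₂ : ℕ)
            · rw [hz2eq hcase]; exact h12
            · rw [hu]
              by_cases hlt2 : (m : ℕ) < (L z₂ : ℕ)
              · have harg : (L z₁ : ℕ) + ((m : ℕ) - (L z₁ : ℕ)) = (m : ℕ) := by omega
                have hres := hA1 ((m : ℕ) - (L z₁ : ℕ)) (by omega) (by omega)
                rwa [harg] at hres
              · have harg : (L z₂ : ℕ) + ((m : ℕ) - (L z₂ : ℕ)) = (m : ℕ) := by omega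
                have hres := hc ((m : ℕ) - (L z₂ : ℕ)) (by omega) (by omega)
                rwa [harg] at hres
          · apply hMe
            by_cases hcase : (m : ℕ) = (L z₂ : ℕ)
            · rw [hz2eq hcase]; exact h23
            · rw [hu]
              exact hV _ (by omega) (by omega) hcase
        have hcard := hpigeon _ _ hmap
        rw [Fin.card_Ioo, Fin.card_Ioo] at hcard
        omega
      set sw := Nat.find hsex with hswdef
      obtain ⟨hsw1, hswl, hswnot⟩ := Nat.find_spec hsex
      have hswmin : ∀ j, 1 ≤ j → j < sw → z₁ < xx ((L z₂ : ℕ) + j) := by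
        intro j h1 hj
        by_contra hcj
        exact Nat.find_min hsex hj ⟨h1, by omega, hcj⟩
      have hswN : (L z₂ : ℕ) + sw < Fintype.card X := by omega
      set a2 := fmk z₁ ((L z₂ : ℕ) + sw) with ha2def
      set b2 := fmk z₁ (L z₁ : ℕ) with hb2def
      have ha2v : (a2 : ℕ) = (L z₂ : ℕ) + sw := fmk_val z₁ hswN
      have hb2v : (b2 : ℕ) = (L z₁ : ℕ) := fmk_val z₁ (by omega)
      have hxxsw : (L (xx ((L z₂ : ℕ) + sw)) : ℕ) = (L z₂ : ℕ) + sw := hxxL _ hswN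
      have hL1sw : (L1 (xx ((L z₂ : ℕ) + sw)) : ℕ) = (L z₂ : ℕ) + sw := by
        rcases hL1rng (xx ((L z₂ : ℕ) + sw)) with h | h <;> omega
      have hsymm2 : L1.symm a2 = xx ((L z₂ : ℕ) + sw) := by
        have h : a2 = L1 (xx ((L z₂ : ℕ) + sw)) := Fin.ext (by rw [ha2v, hL1sw])
        rw [h, Equiv.symm_apply_apply]
      have hExtB : ∀ p q : X, p < q →
          (L1.trans (slide a2 b2)) p < (L1.trans (slide a2 b2)) q := by
        apply ext_slide hExt1
        · intro u hu1 hu2; exfalso; rw [ha2v] at hu1; rw [hb2v] at hu2; omega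
        · intro u hu1 hu2
          rw [hb2v] at hu1; rw [ha2v] at hu2
          rw [hsymm2]
          have hm' : (L z₁ : ℕ) ≤ (L u : ℕ) ∧ (L u : ℕ) < (L z₂ : ℕ) + sw := by
            rcases hL1rng u with h | h <;> omega
          by_cases hcz1 : (L u : ℕ) = (L z₁ : ℕ)
          · have : u = z₁ := hidz u z₁ hcz1
            rw [this]; exact hswnot
          · by_cases hcz2 : (L u : ℕ) = (L z₂ : ℕ)
            · have : u = z₂ := hidz u z₂ hcz2
              rw [this]
              intro hcc
              exact hswnot (lt_trans h12 hcc)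
            · have hj : u = xx (L u : ℕ) := hident u _ (by omega) rfl
              by_cases hlt2 : (L u : ℕ) < (L z₂ : ℕ)
              · have harg : (L z₁ : ℕ) + ((L u : ℕ) - (L z₁ : ℕ)) = (L u : ℕ) := by omega
                have hz1u : z₁ < xx (L u : ℕ) := by
                  have hres := hA1 ((L u : ℕ) - (L z₁ : ℕ)) (by omega) (by omega)
                  rwa [harg] at hres
                intro hcc
                exact hswnot (lt_trans (hj ▸ hz1u) hcc)
              · have harg : (L z₂ : ℕ) + ((L u : ℕ) - (L z₂ : ℕ)) = (L u : ℕ) := by omega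
                have hz1u : z₁ < xx (L u : ℕ) := by
                  have hres := hswmin ((L u : ℕ) - (L z₂ : ℕ)) (by omega) (by omega)
                  rwa [harg] at hres
                intro hcc
                exact hswnot (lt_trans (hj ▸ hz1u) hcc)
      have e1 : ((L1.trans (slide a2 b2)) z₁ : ℕ) = (L z₁ : ℕ) + 1 := by
        rw [pos_slide, ha2v, hb2v, hz1L1]; split_ifs <;> omega
      have e2 : ((L1.trans (slide a2 b2)) z₂ : ℕ) = (L z₂ : ℕ) := by
        rw [pos_slide, ha2v, hb2v, hz2L1]; split_ifs <;> omega
      have e3 : ((L1.trans (slide a2 b2)) z₃ : ℕ) = (L z₃ : ℕ) := by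
        rw [pos_slide, ha2v, hb2v, hz3L1]; split_ifs <;> omega
      have hiclt : istar - 1 < k := by omega
      set ic : Fin k := ⟨istar - 1, hiclt⟩ with hicdef
      have htlt : sw < l := by omega
      set tc : Fin l := ⟨sw, htlt⟩ with htcdef
      have htcv : (tc : ℕ) = sw := rfl
      refine ⟨L1.trans (slide a2 b2), 0, ic, tc,
        ⟨hExtB, by omega, by omega⟩, ?_⟩
      rw [psiA]
      rw [if_pos rfl, if_neg (by rw [htcv]; omega)]
      have c1 : fmk z₁ (((L1.trans (slide a2 b2)) z₁ : ℕ) - 1) = b2 := by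
        have harg : ((L1.trans (slide a2 b2)) z₁ : ℕ) - 1 = (L z₁ : ℕ) := by omega
        rw [harg, hb2def]
      have c2 : fmk z₁ (((L1.trans (slide a2 b2)) z₂ : ℕ) + (tc : ℕ)) = a2 := by
        have harg : ((L1.trans (slide a2 b2)) z₂ : ℕ) + (tc : ℕ) = (L z₂ : ℕ) + sw := by omega
        rw [harg, ha2def]
      have c3 : fmk z₁ ((L1.trans (slide a2 b2)) z₂ : ℕ) = b1 := by
        have harg : ((L1.trans (slide a2 b2)) z₂ : ℕ) = (L z₂ : ℕ) := by omega
        rw [harg, hb1def]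
      have c4 : fmk z₁ (((L1.trans (slide a2 b2)) z₁ : ℕ) + (ic : ℕ)) = a1 := by
        have hicv : (ic : ℕ) = istar - 1 := rfl
        have harg : ((L1.trans (slide a2 b2)) z₁ : ℕ) + (ic : ℕ) = (L z₁ : ℕ) + istar := by
          omega
        rw [harg, ha1def]
      rw [c1, c2, c3, c4]
      rw [slide_cancel]
      exact slide_cancel L a1 b1

lemma keyB (z₁ z₂ z₃ : X) (h12 : z₁ < z₂) (h23 : z₂ < z₃) {k l : ℕ} (hk : 1 ≤ k) (hl : 1 ≤ l)
    {M L : X ≃ Fin (Fintype.card X)}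
    (hMe : ∀ a b : X, a < b → M a < M b) (hM2 : (M z₂ : ℕ) = (M z₁ : ℕ) + (k+2))
    (hM3 : (M z₃ : ℕ) = (M z₂ : ℕ) + l)
    (hLe : ∀ a b : X, a < b → L a < L b) (hL2 : (L z₂ : ℕ) = (L z₁ : ℕ) + (k+1))
    (hL3 : (L z₃ : ℕ) = (L z₂ : ℕ) + l) :
    ∃ (L' : X ≃ Fin (Fintype.card X)) (q : Fin (Fintype.card X)) (t : Fin l),
      ((∀ a b : X, a < b → L' a < L' b) ∧ (L' z₂ : ℕ) = (L' z₁ : ℕ) + (k+2) ∧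
        (L' z₃ : ℕ) = (L' z₂ : ℕ) + l) ∧ psiB z₁ z₂ z₃ L' q t = L := by
  have hNpos : 0 < Fintype.card X := Fintype.card_pos_iff.mpr ⟨z₁⟩
  have h3N : (L z₃ : ℕ) < Fintype.card X := (L z₃).isLt
  have h3NM : (M z₃ : ℕ) < Fintype.card X := (M z₃).isLt
  have hidz : ∀ (u v : X), (L u : ℕ) = (L v : ℕ) → u = v := fun u v h => L.injective (Fin.ext h)
  have hpigeon : ∀ (s t : Finset (Fin (Fintype.card X))),
      (∀ m ∈ s, M (L.symm m) ∈ t) → s.card ≤ t.card := by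
    intro s t h
    exact Finset.card_le_card_of_injOn _ h ((M.injective.comp L.symm.injective).injOn)
  have hpigeonML : ∀ (s t : Finset (Fin (Fintype.card X))),
      (∀ m ∈ s, L (M.symm m) ∈ t) → s.card ≤ t.card := by
    intro s t h
    exact Finset.card_le_card_of_injOn _ h ((L.injective.comp M.symm.injective).injOn)
  by_cases hEL : (Finset.univ.filter
      (fun u : X => (L u : ℕ) < (L z₁ : ℕ) ∧ ¬ u < z₁)).Nonempty
  · -- Case BL : an element below z₁ incomparable to it; slide a maximal one just above z₁
    obtain ⟨y, hy, hymax'⟩ := Finset.exists_maximal hEL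
    have hymax : ∀ x, x ∈ Finset.univ.filter
        (fun u : X => (L u : ℕ) < (L z₁ : ℕ) ∧ ¬ u < z₁) → ¬ y < x :=
      fun x hx hlt => lt_irrefl _ (lt_of_lt_of_le hlt (hymax' hx hlt.le))
    rw [Finset.mem_filter] at hy
    obtain ⟨-, hyp, hynz⟩ := hy
    have hExtL : ∀ p q : X, p < q →
        (L.trans (slide (L y) (L z₁))) p < (L.trans (slide (L y) (L z₁))) q := by
      apply ext_slide hLe
      · intro u hu1 hu2
        rw [Equiv.symm_apply_apply]
        rcases Nat.eq_or_lt_of_le hu2 with heq | hlt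
        · have : u = z₁ := hidz u z₁ heq
          rw [this]; exact hynz
        · intro hc
          have hunz : ¬ u < z₁ := fun hcc => hynz (lt_trans hc hcc)
          exact hymax u (Finset.mem_filter.mpr ⟨Finset.mem_univ u, by omega, hunz⟩) hc
      · intro u hu1 hu2; exfalso; omega
    have e1 : ((L.trans (slide (L y) (L z₁))) z₁ : ℕ) = (L z₁ : ℕ) - 1 := by
      have hyne : (L z₁ : ℕ) ≠ (L y : ℕ) := by omega
      rw [pos_slide]; split_ifs <;> omega
    have e2 : ((L.trans (slide (L y) (L z₁))) z₂ : ℕ) = (L z₂ : ℕ) := by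
      rw [pos_slide]; split_ifs <;> omega
    have e3 : ((L.trans (slide (L y) (L z₁))) z₃ : ℕ) = (L z₃ : ℕ) := by
      rw [pos_slide]; split_ifs <;> omega
    refine ⟨L.trans (slide (L y) (L z₁)), L y, ⟨0, by omega⟩,
      ⟨hExtL, by omega, by omega⟩, ?_⟩
    rw [psiB]
    rw [if_pos rfl, if_pos (by omega)]
    have c1 : fmk z₁ (((L.trans (slide (L y) (L z₁))) z₁ : ℕ) + 1) = L z₁ := by
      have h1N := (L z₁).isLt
      apply Fin.ext
      rw [fmk_val z₁ (by omega)]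
      omega
    rw [c1]
    exact slide_cancel L (L y) (L z₁)
  · -- Case BR
    have hELe : ∀ u : X, (L u : ℕ) < (L z₁ : ℕ) → u < z₁ := by
      intro u hu
      by_contra hc
      exact hEL ⟨u, Finset.mem_filter.mpr ⟨Finset.mem_univ u, hu, hc⟩⟩
    have hER : (Finset.univ.filter
        (fun u : X => (L z₂ : ℕ) < (L u : ℕ) ∧ ¬ z₂ < u)).Nonempty := by
      by_contra hc
      have hERe : ∀ u : X, (L z₂ : ℕ) < (L u : ℕ) → z₂ < u := by
        intro u hu
        by_contra hcc
        exact hc ⟨u, Finset.mem_filter.mpr ⟨Finset.mem_univ u, hu, hcc⟩⟩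
      have hmap : ∀ m ∈ Finset.Ioo (M z₁) (M z₂), L (M.symm m) ∈ Finset.Ioo (L z₁) (L z₂) := by
        intro m hm
        rw [Finset.mem_Ioo] at hm ⊢
        have hm1 : (M z₁ : ℕ) < (m : ℕ) := hm.1
        have hm2 : (m : ℕ) < (M z₂ : ℕ) := hm.2
        have hMu : (M (M.symm m) : ℕ) = (m : ℕ) := by rw [Equiv.apply_symm_apply]
        have hnlt1 : ¬ M.symm m < z₁ := fun hcc => by
          have := hMe _ _ hcc; rw [Fin.lt_def] at this; omega
        have hnlt2 : ¬ z₂ < M.symm m := fun hcc => by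
          have := hMe _ _ hcc; rw [Fin.lt_def] at this; omega
        have hne1 : M.symm m ≠ z₁ := fun h => by rw [h] at hMu; omega
        have hne2 : M.symm m ≠ z₂ := fun h => by rw [h] at hMu; omega
        constructor
        · have : (L z₁ : ℕ) < (L (M.symm m) : ℕ) := by
            rcases lt_trichotomy ((L (M.symm m) : ℕ)) ((L z₁ : ℕ)) with h | h | h
            · exact absurd (hELe _ h) hnlt1
            · exact absurd (hidz _ z₁ h) hne1
            · exact h
          exact this
        · have : (L (M.symm m) : ℕ) < (L z₂ : ℕ) := by
            rcases lt_trichotomy ((L (M.symm m) : ℕ)) ((L z₂ : ℕ)) with h | h | h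
            · exact h
            · exact absurd (hidz _ z₂ h) hne2
            · exact absurd (hERe _ h) hnlt2
          exact this
      have hcard := hpigeonML _ _ hmap
      rw [Fin.card_Ioo, Fin.card_Ioo] at hcard
      omega
    obtain ⟨y, hyER, hymin'⟩ := Finset.exists_minimal hER
    have hymin : ∀ x, x ∈ Finset.univ.filter
        (fun u : X => (L z₂ : ℕ) < (L u : ℕ) ∧ ¬ z₂ < u) → ¬ x < y :=
      fun x hx hlt => lt_irrefl _ (lt_of_lt_of_le hlt (hymin' hx hlt.le))
    rw [Finset.mem_filter] at hyER
    obtain ⟨-, hy2, hynz2⟩ := hyER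
    have hcnd : ∀ u : X, (L z₂ : ℕ) ≤ (L u : ℕ) → (L u : ℕ) < (L y : ℕ) → ¬ u < y := by
      intro u hu1 hu2
      rcases Nat.eq_or_lt_of_le hu1 with heq | hlt
      · have : u = z₂ := hidz u z₂ heq.symm
        rw [this]; exact hynz2
      · intro hc
        by_cases hzu : z₂ < u
        · exact hynz2 (lt_trans hzu hc)
        · exact hymin u (Finset.mem_filter.mpr ⟨Finset.mem_univ u, hlt, hzu⟩) hc
    by_cases hbr : (L z₃ : ℕ) < (L y : ℕ)
    · -- BR1 : y lies beyond z₃; slide it down to just before z₂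
      have hExtR : ∀ p q : X, p < q →
          (L.trans (slide (L y) (L z₂))) p < (L.trans (slide (L y) (L z₂))) q := by
        apply ext_slide hLe
        · intro u hu1 hu2; exfalso; omega
        · intro u hu1 hu2
          rw [Equiv.symm_apply_apply]
          exact hcnd u hu1 hu2
      have e1 : ((L.trans (slide (L y) (L z₂))) z₁ : ℕ) = (L z₁ : ℕ) := by
        rw [pos_slide]; split_ifs <;> omega
      have e2 : ((L.trans (slide (L y) (L z₂))) z₂ : ℕ) = (L z₂ : ℕ) + 1 := by
        rw [pos_slide]; split_ifs <;> omega
      have e3 : ((L.trans (slide (L y) (L z₂))) z₃ : ℕ) = (L z₃ : ℕ) + 1 := by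
        rw [pos_slide]; split_ifs <;> omega
      refine ⟨L.trans (slide (L y) (L z₂)), L y, ⟨0, by omega⟩,
        ⟨hExtR, by omega, by omega⟩, ?_⟩
      rw [psiB]
      rw [if_pos rfl, if_neg (by omega)]
      have c1 : fmk z₁ (((L.trans (slide (L y) (L z₂))) z₂ : ℕ) - 1) = L z₂ := by
        have h2N := (L z₂).isLt
        apply Fin.ext
        rw [fmk_val z₁ (by omega)]
        omega
      rw [c1]
      exact slide_cancel L (L y) (L z₂)
    · -- BR2 : y lies between z₂ and z₃
      have hyne3 : (L y : ℕ) ≠ (L z₃ : ℕ) := fun h => hynz2 (by rw [hidz y z₃ h]; exact h23)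
      have hy3 : (L y : ℕ) < (L z₃ : ℕ) := by omega
      have hG : (Finset.univ.filter
          (fun u : X => (L z₃ : ℕ) < (L u : ℕ) ∧ ¬ z₃ < u)).Nonempty := by
        by_contra hc
        have hGe : ∀ u : X, (L z₃ : ℕ) < (L u : ℕ) → z₃ < u := by
          intro u hu
          by_contra hcc
          exact hc ⟨u, Finset.mem_filter.mpr ⟨Finset.mem_univ u, hu, hcc⟩⟩
        have hmap1 : ∀ m ∈ Finset.Ioi (L z₃), M (L.symm m) ∈ Finset.Ioi (M z₃) := by
          intro m hm
          rw [Finset.mem_Ioi] at hm ⊢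
          have hLu : (L (L.symm m) : ℕ) = (m : ℕ) := by rw [Equiv.apply_symm_apply]
          have : z₃ < L.symm m := hGe _ (by rw [hLu]; exact hm)
          exact hMe _ _ this
        have h1c := hpigeon _ _ hmap1
        rw [Fin.card_Ioi, Fin.card_Ioi] at h1c
        have hmap2 : ∀ m ∈ Finset.Iio (L z₁), M (L.symm m) ∈ Finset.Iio (M z₁) := by
          intro m hm
          rw [Finset.mem_Iio] at hm ⊢
          have hLu : (L (L.symm m) : ℕ) = (m : ℕ) := by rw [Equiv.apply_symm_apply]
          have : L.symm m < z₁ := hELe _ (by rw [hLu]; exact hm)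
          exact hMe _ _ this
        have h2c := hpigeon _ _ hmap2
        rw [Fin.card_Iio, Fin.card_Iio] at h2c
        omega
      obtain ⟨v, hvG, hvmin'⟩ := Finset.exists_minimal hG
      have hvmin : ∀ x, x ∈ Finset.univ.filter
          (fun u : X => (L z₃ : ℕ) < (L u : ℕ) ∧ ¬ z₃ < u) → ¬ x < v :=
        fun x hx hlt => lt_irrefl _ (lt_of_lt_of_le hlt (hvmin' hx hlt.le))
      rw [Finset.mem_filter] at hvG
      obtain ⟨-, hv3, hvnz⟩ := hvG
      have hExtR : ∀ p q : X, p < q →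
          (L.trans (slide (L y) (L z₂))) p < (L.trans (slide (L y) (L z₂))) q := by
        apply ext_slide hLe
        · intro u hu1 hu2; exfalso; omega
        · intro u hu1 hu2
          rw [Equiv.symm_apply_apply]
          exact hcnd u hu1 hu2
      have hL1rng : ∀ u : X, (((L.trans (slide (L y) (L z₂))) u : ℕ) = (L u : ℕ)) ∨
          ((L z₂ : ℕ) ≤ ((L.trans (slide (L y) (L z₂))) u : ℕ) ∧
            ((L.trans (slide (L y) (L z₂))) u : ℕ) ≤ (L y : ℕ) ∧
            (L z₂ : ℕ) ≤ (L u : ℕ) ∧ (L u : ℕ) ≤ (L y : ℕ)) := by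
        intro u
        rw [pos_slide]
        split_ifs <;> omega
      have hz1L1 : ((L.trans (slide (L y) (L z₂))) z₁ : ℕ) = (L z₁ : ℕ) := by
        rw [pos_slide]; split_ifs <;> omega
      have hz2L1 : ((L.trans (slide (L y) (L z₂))) z₂ : ℕ) = (L z₂ : ℕ) + 1 := by
        rw [pos_slide]; split_ifs <;> omega
      have hz3L1 : ((L.trans (slide (L y) (L z₂))) z₃ : ℕ) = (L z₃ : ℕ) := by
        rw [pos_slide]; split_ifs <;> omega
      have hL1v : ((L.trans (slide (L y) (L z₂))) v : ℕ) = (L v : ℕ) := by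
        rcases hL1rng v with h | h <;> omega
      have hsymm2 : (L.trans (slide (L y) (L z₂))).symm (L v) = v := by
        have h : L v = (L.trans (slide (L y) (L z₂))) v := Fin.ext (by rw [hL1v])
        rw [h, Equiv.symm_apply_apply]
      have hExt2 : ∀ p q : X, p < q →
          ((L.trans (slide (L y) (L z₂))).trans (slide (L v) (L z₃))) p <
          ((L.trans (slide (L y) (L z₂))).trans (slide (L v) (L z₃))) q := by
        apply ext_slide hExtR
        · intro u hu1 hu2; exfalso; omega
        · intro u hu1 hu2
          rw [hsymm2]
          have hLu : ((L.trans (slide (L y) (L z₂))) u : ℕ) = (L u : ℕ) := by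
            rcases hL1rng u with h | h <;> omega
          rw [hLu] at hu1 hu2
          rcases Nat.eq_or_lt_of_le hu1 with heq | hlt
          · have : u = z₃ := hidz u z₃ heq.symm
            rw [this]; exact hvnz
          · intro hc
            by_cases hzu : z₃ < u
            · exact hvnz (lt_trans hzu hc)
            · exact hvmin u (Finset.mem_filter.mpr ⟨Finset.mem_univ u, hlt, hzu⟩) hc
      have e1 : (((L.trans (slide (L y) (L z₂))).trans (slide (L v) (L z₃))) z₁ : ℕ)
          = (L z₁ : ℕ) := by
        rw [pos_slide, hz1L1]; split_ifs <;> omega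
      have e2 : (((L.trans (slide (L y) (L z₂))).trans (slide (L v) (L z₃))) z₂ : ℕ)
          = (L z₂ : ℕ) + 1 := by
        rw [pos_slide, hz2L1]; split_ifs <;> omega
      have e3 : (((L.trans (slide (L y) (L z₂))).trans (slide (L v) (L z₃))) z₃ : ℕ)
          = (L z₃ : ℕ) + 1 := by
        rw [pos_slide, hz3L1]; split_ifs <;> omega
      have htlt : (L y : ℕ) - (L z₂ : ℕ) < l := by omega
      set tc : Fin l := ⟨(L y : ℕ) - (L z₂ : ℕ), htlt⟩ with htcdef
      have htcv : (tc : ℕ) = (L y : ℕ) - (L z₂ : ℕ) := rfl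
      refine ⟨(L.trans (slide (L y) (L z₂))).trans (slide (L v) (L z₃)), L v, tc,
        ⟨hExt2, by omega, by omega⟩, ?_⟩
      rw [psiB]
      rw [if_neg (by rw [htcv]; omega)]
      have c1 : fmk z₁
          ((((L.trans (slide (L y) (L z₂))).trans (slide (L v) (L z₃))) z₃ : ℕ) - 1) = L z₃ := by
        apply Fin.ext
        rw [fmk_val z₁ (by omega)]
        omega
      rw [c1, slide_cancel]
      have c3 : fmk z₁
          ((((L.trans (slide (L y) (L z₂))).trans (slide (L v) (L z₃))) z₂ : ℕ) - 1) = L z₂ := by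
        have h2N := (L z₂).isLt
        apply Fin.ext
        rw [fmk_val z₁ (by omega)]
        omega
      have c4 : fmk z₁
          ((((L.trans (slide (L y) (L z₂))).trans (slide (L v) (L z₃))) z₂ : ℕ) - 1 + (tc : ℕ))
          = L y := by
        apply Fin.ext
        rw [fmk_val z₁ (by omega)]
        omega
      rw [c3, c4]
      exact slide_cancel L (L y) (L z₂)

end Key


section Count
variable {X : Type} [PartialOrder X] [Fintype X]

lemma finite_equiv_aux : Finite (X ≃ Fin (Fintype.card X)) :=
  Finite.of_injective (fun e => (e : X → Fin (Fintype.card X)))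
    (fun a b h => Equiv.coe_fn_injective h)

lemma countA (z₁ z₂ z₃ : X) (h12 : z₁ < z₂) (h23 : z₂ < z₃) {k l : ℕ}
    (hk : 1 ≤ k) (hl : 1 ≤ l)
    (hM : Nonempty {L : X ≃ Fin (Fintype.card X) // (∀ a b : X, a < b → L a < L b) ∧
      (L z₂ : ℕ) = (L z₁ : ℕ) + k ∧ (L z₃ : ℕ) = (L z₂ : ℕ) + l}) :
    F X z₁ z₂ z₃ (k+1) l ≤ 2 * k * l * F X z₁ z₂ z₃ k l := by
  have hfin := @finite_equiv_aux X _ _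
  obtain ⟨⟨M, hMe, hM2, hM3⟩⟩ := hM
  have key : ∀ L : {L : X ≃ Fin (Fintype.card X) // (∀ a b : X, a < b → L a < L b) ∧
      (L z₂ : ℕ) = (L z₁ : ℕ) + (k+1) ∧ (L z₃ : ℕ) = (L z₂ : ℕ) + l},
      ∃ P : {L' : X ≃ Fin (Fintype.card X) // (∀ a b : X, a < b → L' a < L' b) ∧
        (L' z₂ : ℕ) = (L' z₁ : ℕ) + k ∧ (L' z₃ : ℕ) = (L' z₂ : ℕ) + l} ×
        Fin 2 × Fin k × Fin l,
      psiA z₁ z₂ z₃ P.1.val P.2.1 P.2.2.1 P.2.2.2 = L.val := by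
    rintro ⟨L, hLe, hL2, hL3⟩
    obtain ⟨L', b, i, t, hG, hpsi⟩ := keyA z₁ z₂ z₃ h12 h23 hk hl hMe hM2 hM3 hLe hL2 hL3
    exact ⟨⟨⟨L', hG⟩, b, i, t⟩, hpsi⟩
  have hinj : Function.Injective (fun L => (key L).choose) := by
    intro L₁ L₂ h
    have h' : (key L₁).choose = (key L₂).choose := h
    apply Subtype.ext
    rw [← (key L₁).choose_spec, ← (key L₂).choose_spec, h']
  have hcard := Nat.card_le_card_of_injective _ hinj
  have hEq : Nat.card ({L' : X ≃ Fin (Fintype.card X) // (∀ a b : X, a < b → L' a < L' b) ∧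
        (L' z₂ : ℕ) = (L' z₁ : ℕ) + k ∧ (L' z₃ : ℕ) = (L' z₂ : ℕ) + l} ×
        Fin 2 × Fin k × Fin l) = 2 * k * l * F X z₁ z₂ z₃ k l := by
    rw [Nat.card_prod, Nat.card_prod, Nat.card_prod]
    have h2 : Nat.card (Fin 2) = 2 := by rw [Nat.card_eq_fintype_card, Fintype.card_fin]
    have hkc : Nat.card (Fin k) = k := by rw [Nat.card_eq_fintype_card, Fintype.card_fin]
    have hlc : Nat.card (Fin l) = l := by rw [Nat.card_eq_fintype_card, Fintype.card_fin]
    rw [h2, hkc, hlc]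
    show F X z₁ z₂ z₃ k l * (2 * (k * l)) = _
    ring
  exact le_trans hcard (le_of_eq hEq)

lemma countB (z₁ z₂ z₃ : X) (h12 : z₁ < z₂) (h23 : z₂ < z₃) {k l : ℕ}
    (hk : 1 ≤ k) (hl : 1 ≤ l)
    (hM : Nonempty {L : X ≃ Fin (Fintype.card X) // (∀ a b : X, a < b → L a < L b) ∧
      (L z₂ : ℕ) = (L z₁ : ℕ) + (k+2) ∧ (L z₃ : ℕ) = (L z₂ : ℕ) + l}) :
    F X z₁ z₂ z₃ (k+1) l ≤ Fintype.card X * l * F X z₁ z₂ z₃ (k+2) l := by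
  have hfin := @finite_equiv_aux X _ _
  obtain ⟨⟨M, hMe, hM2, hM3⟩⟩ := hM
  have key : ∀ L : {L : X ≃ Fin (Fintype.card X) // (∀ a b : X, a < b → L a < L b) ∧
      (L z₂ : ℕ) = (L z₁ : ℕ) + (k+1) ∧ (L z₃ : ℕ) = (L z₂ : ℕ) + l},
      ∃ P : {L' : X ≃ Fin (Fintype.card X) // (∀ a b : X, a < b → L' a < L' b) ∧
        (L' z₂ : ℕ) = (L' z₁ : ℕ) + (k+2) ∧ (L' z₃ : ℕ) = (L' z₂ : ℕ) + l} ×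
        Fin (Fintype.card X) × Fin l,
      psiB z₁ z₂ z₃ P.1.val P.2.1 P.2.2 = L.val := by
    rintro ⟨L, hLe, hL2, hL3⟩
    obtain ⟨L', q, t, hG, hpsi⟩ := keyB z₁ z₂ z₃ h12 h23 hk hl hMe hM2 hM3 hLe hL2 hL3
    exact ⟨⟨⟨L', hG⟩, q, t⟩, hpsi⟩
  have hinj : Function.Injective (fun L => (key L).choose) := by
    intro L₁ L₂ h
    have h' : (key L₁).choose = (key L₂).choose := h
    apply Subtype.ext
    rw [← (key L₁).choose_spec, ← (key L₂).choose_spec, h']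
  have hcard := Nat.card_le_card_of_injective _ hinj
  have hEq : Nat.card ({L' : X ≃ Fin (Fintype.card X) // (∀ a b : X, a < b → L' a < L' b) ∧
        (L' z₂ : ℕ) = (L' z₁ : ℕ) + (k+2) ∧ (L' z₃ : ℕ) = (L' z₂ : ℕ) + l} ×
        Fin (Fintype.card X) × Fin l) = Fintype.card X * l * F X z₁ z₂ z₃ (k+2) l := by
    rw [Nat.card_prod, Nat.card_prod]
    have hnc : Nat.card (Fin (Fintype.card X)) = Fintype.card X := by
      rw [Nat.card_eq_fintype_card, Fintype.card_fin]
    have hlc : Nat.card (Fin l) = l := by rw [Nat.card_eq_fintype_card, Fintype.card_fin]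
    rw [hnc, hlc]
    show F X z₁ z₂ z₃ (k+2) l * (Fintype.card X * l) = _
    ring
  exact le_trans hcard (le_of_eq hEq)

end Count


theorem Fk_squared_bound (X : Type) [PartialOrder X] [Fintype X]
    (n : ℕ) (hn : Fintype.card X = n)
    (z₁ z₂ z₃ : X) (h12 : z₁ < z₂) (h23 : z₂ < z₃)
    (k l : ℕ) (hk : 1 ≤ k) (hl : 1 ≤ l)
    (hpos : 0 < F X z₁ z₂ z₃ k l * F X z₁ z₂ z₃ (k + 2) l) :
    F X z₁ z₂ z₃ (k + 1) l ^ 2 ≤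
      2 * n * l ^ 2 * k * (F X z₁ z₂ z₃ k l * F X z₁ z₂ z₃ (k + 2) l) := by
  subst hn
  have hfin := @finite_equiv_aux X _ _
  have ha : 0 < F X z₁ z₂ z₃ k l := by
    rcases Nat.eq_zero_or_pos (F X z₁ z₂ z₃ k l) with h | h
    · rw [h, zero_mul] at hpos; omega
    · exact h
  have hb : 0 < F X z₁ z₂ z₃ (k + 2) l := by
    rcases Nat.eq_zero_or_pos (F X z₁ z₂ z₃ (k + 2) l) with h | h
    · rw [h, mul_zero] at hpos; omega
    · exact h
  have hMa : Nonempty {L : X ≃ Fin (Fintype.card X) // (∀ a b : X, a < b → L a < L b) ∧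
      (L z₂ : ℕ) = (L z₁ : ℕ) + k ∧ (L z₃ : ℕ) = (L z₂ : ℕ) + l} :=
    (Nat.card_pos_iff.mp ha).1
  have hMb : Nonempty {L : X ≃ Fin (Fintype.card X) // (∀ a b : X, a < b → L a < L b) ∧
      (L z₂ : ℕ) = (L z₁ : ℕ) + (k+2) ∧ (L z₃ : ℕ) = (L z₂ : ℕ) + l} :=
    (Nat.card_pos_iff.mp hb).1
  have hA := countA z₁ z₂ z₃ h12 h23 hk hl hMa
  have hB := countB z₁ z₂ z₃ h12 h23 hk hl hMb
  calc F X z₁ z₂ z₃ (k + 1) l ^ 2 = F X z₁ z₂ z₃ (k + 1) l * F X z₁ z₂ z₃ (k + 1) l := by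
        ring
    _ ≤ (2 * k * l * F X z₁ z₂ z₃ k l) * (Fintype.card X * l * F X z₁ z₂ z₃ (k+2) l) :=
        Nat.mul_le_mul hA hB
    _ = 2 * Fintype.card X * l ^ 2 * k * (F X z₁ z₂ z₃ k l * F X z₁ z₂ z₃ (k + 2) l) := by
        ring
end
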